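/- arXiv:2308.01388 — 4 statements merged into one kernel-verified Lean document; each statement's English description precedes it below -/
import Mathlib

section
/- For every real k>0 and all real numbers x and v, E_k^{rk1}(x,v) = 𝒥_{k−1/2}(xv) + (xv/(2k+1)) · 𝒥_{k+1/2}(xv). -/
open Real MeasureTheory

/-- The rank-one Dunkl kernel `E_k^{rk1}(x,v)`. -/
noncomputable def Erk1 (k x v : ℝ) : ℝ :=
  (Real.Gamma (k + 1/2) / (Real.sqrt Real.pi * Real.Gamma k)) *
    ∫ z in (-1 : ℝ)..1, Real.exp (z * x * v) * (1 - z) ^ (k - 1) * (1 + z) ^ k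

/-- The normalized modified Bessel function `𝒥_a(y)`, for `a > -1/2`. -/
noncomputable def besselJ (a y : ℝ) : ℝ :=
  (Real.Gamma (a + 1) / (Real.sqrt Real.pi * Real.Gamma (a + 1/2))) *
    ∫ z in (-1 : ℝ)..1, Real.exp (y * z) * (1 - z ^ 2) ^ (a - 1/2)

/-- `W_k(λ,ν)`. -/
noncomputable def Wk (k l1 l2 l3 n1 n2 : ℝ) : ℝ :=
  ((l1 - n1) * (l1 - n2) * (n1 - l2) * (l2 - n2) * (n1 - l3) * (n2 - l3)) ^ (k - 1)

/-- `V(λ) = (λ1-λ2)(λ1-λ3)(λ2-λ3)`. -/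
def Vlam (l1 l2 l3 : ℝ) : ℝ := (l1 - l2) * (l1 - l3) * (l2 - l3)

/-- The `A₂` Dunkl kernel `E_k(X,λ)`, defined via the rank-one kernel formula. -/
noncomputable def EkA2 (k x1 x2 x3 l1 l2 l3 : ℝ) : ℝ :=
  (3 * Real.Gamma (3 * k) / (Vlam l1 l2 l3 ^ (2 * k) * Real.Gamma k ^ 2)) *
    ∫ n2 in l3..l2, ∫ n1 in l2..l1,
      ((n1 - l2) * (l1 - n2) * Erk1 k ((x1 - x2) / 2) (n1 - n2)
        + (l1 - n1) * (l2 - n2) * Erk1 k (-(x1 - x2) / 2) (n1 - n2))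
      * ((n1 - l3) * (n2 - l3)) * Real.exp ((x1 + x2 - 2 * x3) * (n1 + n2) / 2)
      * Wk k l1 l2 l3 n1 n2

open Set intervalIntegral

lemma aesm_aux (k : ℝ) (φ : ℝ → ℝ) (hφ : Continuous φ) (a b : ℝ) (ha : -1 ≤ a) (hb : b ≤ 1)
    (hab : a ≤ b) :
    AEStronglyMeasurable (fun z : ℝ => φ z * (1 - z ^ 2) ^ (k - 1))
      (volume.restrict (Set.uIoc a b)) := by
  rw [Set.uIoc_of_le hab, ← MeasureTheory.Measure.restrict_congr_set MeasureTheory.Ioo_ae_eq_Ioc]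
  refine ContinuousOn.aestronglyMeasurable ?_ measurableSet_Ioo
  refine hφ.continuousOn.mul (ContinuousOn.rpow_const (by fun_prop) ?_)
  intro z hz
  have h1 : -1 < z := lt_of_le_of_lt ha hz.1
  have h2 : z < 1 := lt_of_lt_of_le hz.2 hb
  left
  nlinarith

lemma base_int_half (k : ℝ) (hk : 0 < k) :
    IntervalIntegrable (fun z : ℝ => (1 - z ^ 2) ^ (k - 1)) volume 0 1 := by
  have h1 : IntervalIntegrable (fun z : ℝ => (1 - z) ^ (k - 1)) volume 0 1 := by
    have := (intervalIntegral.intervalIntegrable_rpow'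
      (a := 0) (b := 1) (by linarith : (-1:ℝ) < k - 1)).comp_sub_left 1
    simpa using this.symm
  set C : ℝ := max 1 (2 ^ (k - 1)) with hC
  refine ((h1.const_mul C).mono_fun' ?_ ?_)
  · simpa using aesm_aux k (fun _ => (1:ℝ)) continuous_const 0 1 (by norm_num) le_rfl (by norm_num)
  · rw [Filter.EventuallyLE, ae_restrict_iff' measurableSet_uIoc]
    refine Filter.Eventually.of_forall fun z hz => ?_
    rw [uIoc_of_le (by norm_num : (0:ℝ) ≤ 1)] at hz
    obtain ⟨hz0, hz1⟩ := hz
    have h1z : (0:ℝ) ≤ 1 - z := by linarith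
    have h2z : (0:ℝ) ≤ 1 + z := by linarith
    have hsplit : (1 - z ^ 2) ^ (k - 1) = (1 - z) ^ (k - 1) * (1 + z) ^ (k - 1) := by
      rw [← Real.mul_rpow h1z h2z]; congr 1; ring
    have hb : (1 + z) ^ (k - 1) ≤ C := by
      rcases le_total (k - 1) 0 with h | h
      · exact le_trans (Real.rpow_le_one_of_one_le_of_nonpos (by linarith) h) (le_max_left _ _)
      · exact le_trans (Real.rpow_le_rpow h2z (by linarith) h) (le_max_right _ _)
    have hnn : (0:ℝ) ≤ (1 - z ^ 2) ^ (k - 1) := Real.rpow_nonneg (by nlinarith) _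
    simp only [Real.norm_eq_abs, abs_of_nonneg hnn]
    rw [hsplit, mul_comm C]
    exact mul_le_mul_of_nonneg_left hb (Real.rpow_nonneg h1z _)

lemma base_int (k : ℝ) (hk : 0 < k) :
    IntervalIntegrable (fun z : ℝ => (1 - z ^ 2) ^ (k - 1)) volume (-1) 1 := by
  have hR := base_int_half k hk
  have hL : IntervalIntegrable (fun z : ℝ => (1 - z ^ 2) ^ (k - 1)) volume (-1) 0 := by
    rw [IntervalIntegrable.iff_comp_neg]
    simp only [neg_neg, neg_zero, neg_sq]
    exact hR.symm
  exact hL.trans hR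

lemma weight_int (k : ℝ) (hk : 0 < k) (φ : ℝ → ℝ) (hφ : Continuous φ) :
    IntervalIntegrable (fun z : ℝ => φ z * (1 - z ^ 2) ^ (k - 1)) volume (-1) 1 := by
  obtain ⟨C, hC⟩ := (isCompact_Icc (a := (-1:ℝ)) (b := 1)).exists_bound_of_continuousOn
    hφ.continuousOn
  refine ((base_int k hk).const_mul C).mono_fun' ?_ ?_
  · exact aesm_aux k φ hφ (-1) 1 le_rfl le_rfl (by norm_num)
  · rw [Filter.EventuallyLE, ae_restrict_iff' measurableSet_uIoc]
    refine Filter.Eventually.of_forall fun z hz => ?_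
    rw [Set.uIoc_of_le (by norm_num : (-1:ℝ) ≤ 1)] at hz
    have hmem : z ∈ Set.Icc (-1:ℝ) 1 := ⟨hz.1.le, hz.2⟩
    have hnn : (0:ℝ) ≤ (1 - z ^ 2) ^ (k - 1) := Real.rpow_nonneg (by nlinarith [hmem.1, hmem.2]) _
    simp only [Real.norm_eq_abs, abs_mul, abs_of_nonneg hnn]
    exact mul_le_mul_of_nonneg_right (by simpa using hC z hmem) hnn

lemma key_ibp (k : ℝ) (hk : 0 < k) (y : ℝ) :
    y * ∫ z in (-1:ℝ)..1, Real.exp (y * z) * (1 - z ^ 2) ^ k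
      = 2 * k * ∫ z in (-1:ℝ)..1, z * Real.exp (y * z) * (1 - z ^ 2) ^ (k - 1) := by
  have hcont2 : Continuous (fun z : ℝ => Real.exp (y * z) * (1 - z ^ 2) ^ k) := by
    apply ((Real.continuous_exp.comp (continuous_const.mul continuous_id)).mul
      (Continuous.rpow_const (by continuity) fun z => Or.inr hk.le))
  have hi2 : IntervalIntegrable (fun z : ℝ => Real.exp (y * z) * (1 - z ^ 2) ^ k)
      volume (-1) 1 := hcont2.intervalIntegrable _ _
  have hi1 : IntervalIntegrable (fun z : ℝ => z * Real.exp (y * z) * (1 - z ^ 2) ^ (k - 1))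
      volume (-1) 1 :=
    weight_int k hk (fun z => z * Real.exp (y * z)) (by continuity)
  set F : ℝ → ℝ := fun z => Real.exp (y * z) * (1 - z ^ 2) ^ k with hF
  set f' : ℝ → ℝ := fun z => y * (Real.exp (y * z) * (1 - z ^ 2) ^ k)
      - 2 * k * (z * Real.exp (y * z) * (1 - z ^ 2) ^ (k - 1)) with hf'
  have hderiv : ∀ z ∈ Set.Ioo (-1:ℝ) 1, HasDerivAt F (f' z) z := by
    intro z hz
    have hpos : (0:ℝ) < 1 - z ^ 2 := by nlinarith [hz.1, hz.2]
    have h1 : HasDerivAt (fun z : ℝ => Real.exp (y * z)) (Real.exp (y * z) * y) z := by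
      simpa using ((hasDerivAt_id z).const_mul y).exp
    have h2 : HasDerivAt (fun z : ℝ => 1 - z ^ 2) (-(2 * z)) z := by
      simpa using ((hasDerivAt_pow 2 z).const_sub 1)
    have h3 : HasDerivAt (fun z : ℝ => (1 - z ^ 2) ^ k)
        (-(2 * z) * k * (1 - z ^ 2) ^ (k - 1)) z :=
      h2.rpow_const (Or.inl hpos.ne')
    have : HasDerivAt F _ z := h1.mul h3
    convert this using 1
    simp only [hf']
    ring
  have hint : IntervalIntegrable f' volume (-1) 1 :=
    (hi2.const_mul y).sub (hi1.const_mul (2 * k))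
  have hFTC := intervalIntegral.integral_eq_sub_of_hasDerivAt_of_le (by norm_num)
    hcont2.continuousOn hderiv hint
  have hF1 : F 1 = 0 := by
    simp only [hF]
    norm_num [Real.zero_rpow hk.ne']
  have hFm1 : F (-1) = 0 := by
    simp only [hF]
    norm_num [Real.zero_rpow hk.ne']
  rw [hF1, hFm1, sub_zero] at hFTC
  rw [intervalIntegral.integral_sub (hi2.const_mul y) (hi1.const_mul (2 * k)),
    intervalIntegral.integral_const_mul, intervalIntegral.integral_const_mul] at hFTC
  linarith [hFTC]

/-- Bessel expansion of the rank-one Dunkl kernel. -/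
theorem Erk1_eq_besselJ_add (k : ℝ) (hk : 0 < k) (x v : ℝ) :
    Erk1 k x v
      = besselJ (k - 1/2) (x * v) + (x * v / (2 * k + 1)) * besselJ (k + 1/2) (x * v) := by
  have hEq : Set.EqOn (fun z => Real.exp (z * x * v) * (1 - z) ^ (k - 1) * (1 + z) ^ k)
      (fun z => Real.exp (x * v * z) * (1 - z ^ 2) ^ (k - 1)
        + z * Real.exp (x * v * z) * (1 - z ^ 2) ^ (k - 1)) (Set.uIcc (-1 : ℝ) 1) := by
    intro z hz
    rw [Set.uIcc_of_le (by norm_num : (-1:ℝ) ≤ 1)] at hz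
    obtain ⟨h1, h2⟩ := hz
    rcases eq_or_lt_of_le h1 with heq | hlt
    · simp only [← heq]
      norm_num [Real.zero_rpow hk.ne']
    · have hz1 : (0:ℝ) < 1 + z := by linarith
      have h1z : (0:ℝ) ≤ 1 - z := by linarith
      have e1 : (1 + z) ^ k = (1 + z) ^ (k - 1) * (1 + z) := by
        rw [← Real.rpow_add_one hz1.ne' (k - 1), sub_add_cancel]
      have e2 : (1 - z) ^ (k - 1) * (1 + z) ^ (k - 1) = (1 - z ^ 2) ^ (k - 1) := by
        rw [← Real.mul_rpow h1z hz1.le]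
        congr 1
        ring
      have e0 : z * x * v = x * v * z := by ring
      simp only [e0, e1]
      linear_combination (Real.exp (x * v * z) * (1 + z)) * e2
  have hiA : IntervalIntegrable (fun z : ℝ => Real.exp (x * v * z) * (1 - z ^ 2) ^ (k - 1))
      volume (-1) 1 := weight_int k hk (fun z => Real.exp (x * v * z)) (by continuity)
  have hiB : IntervalIntegrable (fun z : ℝ => z * Real.exp (x * v * z) * (1 - z ^ 2) ^ (k - 1))
      volume (-1) 1 := weight_int k hk (fun z => z * Real.exp (x * v * z)) (by continuity)
  have hkey := key_ibp k hk (x * v)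
  unfold Erk1 besselJ
  rw [intervalIntegral.integral_congr hEq, intervalIntegral.integral_add hiA hiB,
    show k - 1/2 + 1 = k + 1/2 from by ring, show k - 1/2 + 1/2 = k from by ring,
    show k - 1/2 - 1/2 = k - 1 from by ring, show k + 1/2 - 1/2 = k from by ring,
    show k + 1/2 + 1/2 = k + 1 from by ring,
    Real.Gamma_add_one (show k + 1/2 ≠ 0 by positivity),
    Real.Gamma_add_one hk.ne']
  set I0 := ∫ z in (-1:ℝ)..1, Real.exp (x * v * z) * (1 - z ^ 2) ^ (k - 1) with hI0
  set I1 := ∫ z in (-1:ℝ)..1, z * Real.exp (x * v * z) * (1 - z ^ 2) ^ (k - 1) with hI1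
  set I2 := ∫ z in (-1:ℝ)..1, Real.exp (x * v * z) * (1 - z ^ 2) ^ k with hI2
  have hπ : Real.sqrt Real.pi ≠ 0 := by positivity
  have hΓ : Real.Gamma k ≠ 0 := (Real.Gamma_pos_of_pos hk).ne'
  have h2k : (2 * k + 1 : ℝ) ≠ 0 := by positivity
  have hI1eq : I1 = x * v * I2 / (2 * k) := by
    field_simp
    linarith [hkey]
  rw [hI1eq]
  field_simp
end

section
/- (Theorem 3.1, formula (Amri1).) Let λ ∈ C⁺ and X ∈ a. Then Amri's Bessel-type integral formula equals the new rank-one-kernel formula: (3Γ(3k)/(V(λ)^{2k}·Γ(k)²)) ∫_{λ3}^{λ2} ∫_{λ2}^{λ1} { (λ1−λ2)(ν1−ν2)·𝒥_{k−1/2}((x1−x2)(ν1−ν2)/2) + [(λ1−λ2)(ν1−ν2) − 2(λ1−ν1)(λ2−ν2)]·((x1−x2)(ν1−ν2)/(2(2k+1)))·𝒥_{k+1/2}((x1−x2)(ν1−ν2)/2) } (ν1−λ3)(ν2−λ3) e^{(x1+x2−2x3)(ν1+ν2)/2} W_k(λ,ν) dν1 dν2 = E_k(X,λ). -/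
open Real MeasureTheory

open intervalIntegral Set

lemma measurable_core (k : ℝ) : Measurable (fun z : ℝ => (1 - z ^ 2) ^ (k - 1)) := by
  have hm : Measurable (fun u : ℝ => u ^ (k - 1)) :=
    measurable_of_continuousOn_compl_singleton 0 (fun u hu =>
      (Real.continuousAt_rpow_const u (k - 1)
        (Or.inl (by simpa using hu))).continuousWithinAt)
  exact hm.comp (measurable_const.sub (measurable_id.pow_const 2))

lemma bound_aux {k t : ℝ} (hk : 0 < k) (h1 : 1 ≤ t) (h2 : t ≤ 2) :
    t ^ (k - 1) ≤ (2 : ℝ) ^ (k - 1) + 1 := by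
  rcases le_or_gt 1 k with h | h
  · have : t ^ (k - 1) ≤ (2 : ℝ) ^ (k - 1) :=
      Real.rpow_le_rpow (by linarith) h2 (by linarith)
    linarith
  · have h3 : t ^ (k - 1) ≤ 1 := Real.rpow_le_one_of_one_le_of_nonpos h1 (by linarith)
    have h4 : (0 : ℝ) ≤ (2 : ℝ) ^ (k - 1) := Real.rpow_nonneg (by norm_num) _
    linarith

lemma half_pos_int {k : ℝ} (hk : 0 < k) :
    IntervalIntegrable (fun z : ℝ => (1 - z ^ 2) ^ (k - 1)) volume 0 1 := by
  have hrpow : IntervalIntegrable (fun x : ℝ => x ^ (k - 1)) volume 1 0 :=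
    intervalIntegrable_rpow' (by linarith)
  have hg : IntervalIntegrable
      (fun z : ℝ => ((2 : ℝ) ^ (k - 1) + 1) * (1 - z) ^ (k - 1)) volume 0 1 := by
    simpa using (hrpow.comp_sub_left 1).const_mul ((2 : ℝ) ^ (k - 1) + 1)
  apply hg.mono_fun' ((measurable_core k).aestronglyMeasurable)
  rw [Set.uIoc_of_le (by norm_num : (0:ℝ) ≤ 1)]
  filter_upwards [ae_restrict_mem measurableSet_Ioc] with z hz
  obtain ⟨hz0, hz1⟩ := hz
  have h1 : (0:ℝ) ≤ 1 - z := by linarith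
  have h2 : (0:ℝ) < 1 + z := by linarith
  have hnn : (0:ℝ) ≤ 1 - z ^ 2 := by nlinarith
  rw [Real.norm_eq_abs, abs_of_nonneg (Real.rpow_nonneg hnn _)]
  rw [show (1:ℝ) - z ^ 2 = (1 - z) * (1 + z) by ring, Real.mul_rpow h1 h2.le]
  calc (1 - z) ^ (k-1) * (1 + z) ^ (k-1)
      ≤ (1 - z) ^ (k-1) * ((2:ℝ) ^ (k-1) + 1) := by
        exact mul_le_mul_of_nonneg_left (bound_aux hk (by linarith) (by linarith))
          (Real.rpow_nonneg h1 _)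
    _ = ((2:ℝ) ^ (k-1) + 1) * (1 - z) ^ (k-1) := mul_comm _ _

lemma half_neg_int {k : ℝ} (hk : 0 < k) :
    IntervalIntegrable (fun z : ℝ => (1 - z ^ 2) ^ (k - 1)) volume (-1) 0 := by
  have hrpow : IntervalIntegrable (fun x : ℝ => x ^ (k - 1)) volume 0 1 :=
    intervalIntegrable_rpow' (by linarith)
  have hg : IntervalIntegrable
      (fun z : ℝ => ((2 : ℝ) ^ (k - 1) + 1) * (1 + z) ^ (k - 1)) volume (-1) 0 := by
    have := (hrpow.comp_sub_right (-1)).const_mul ((2 : ℝ) ^ (k - 1) + 1)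
    norm_num [sub_neg_eq_add] at this
    convert this using 2 with z
    ring_nf
  apply hg.mono_fun' ((measurable_core k).aestronglyMeasurable)
  rw [Set.uIoc_of_le (by norm_num : (-1:ℝ) ≤ 0)]
  filter_upwards [ae_restrict_mem measurableSet_Ioc] with z hz
  obtain ⟨hz0, hz1⟩ := hz
  have h1 : (0:ℝ) < 1 - z := by linarith
  have h2 : (0:ℝ) ≤ 1 + z := by linarith
  have hnn : (0:ℝ) ≤ 1 - z ^ 2 := by nlinarith
  rw [Real.norm_eq_abs, abs_of_nonneg (Real.rpow_nonneg hnn _)]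
  rw [show (1:ℝ) - z ^ 2 = (1 + z) * (1 - z) by ring, Real.mul_rpow h2 h1.le]
  calc (1 + z) ^ (k-1) * (1 - z) ^ (k-1)
      ≤ (1 + z) ^ (k-1) * ((2:ℝ) ^ (k-1) + 1) := by
        exact mul_le_mul_of_nonneg_left (bound_aux hk (by linarith) (by linarith))
          (Real.rpow_nonneg h2 _)
    _ = ((2:ℝ) ^ (k-1) + 1) * (1 + z) ^ (k-1) := mul_comm _ _

lemma core_int {k : ℝ} (hk : 0 < k) :
    IntervalIntegrable (fun z : ℝ => (1 - z ^ 2) ^ (k - 1)) volume (-1) 1 :=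
  (half_neg_int hk).trans (half_pos_int hk)

lemma cont_powk {k : ℝ} (hk : 0 < k) : Continuous (fun z : ℝ => (1 - z ^ 2) ^ k) :=
  (Real.continuous_rpow_const hk.le).comp (continuous_const.sub (continuous_pow 2))

lemma intB {k : ℝ} (hk : 0 < k) (y : ℝ) :
    IntervalIntegrable (fun z : ℝ => Real.exp (y * z) * (1 - z ^ 2) ^ k) volume (-1) 1 :=
  ((Real.continuous_exp.comp (continuous_const.mul continuous_id)).mul (cont_powk hk)).intervalIntegrable _ _

lemma intA {k : ℝ} (hk : 0 < k) (y : ℝ) :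
    IntervalIntegrable (fun z : ℝ => Real.exp (y * z) * (1 - z ^ 2) ^ (k - 1)) volume (-1) 1 :=
  (core_int hk).continuousOn_mul
    (Real.continuous_exp.comp (continuous_const.mul continuous_id)).continuousOn

lemma intZ {k : ℝ} (hk : 0 < k) (y : ℝ) :
    IntervalIntegrable (fun z : ℝ => Real.exp (y * z) * z * (1 - z ^ 2) ^ (k - 1)) volume (-1) 1 :=
  (core_int hk).continuousOn_mul
    ((Real.continuous_exp.comp (continuous_const.mul continuous_id)).mul continuous_id).continuousOn

lemma ibp {k : ℝ} (hk : 0 < k) (y : ℝ) :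
    ∫ z in (-1:ℝ)..1, Real.exp (y * z) * z * (1 - z ^ 2) ^ (k - 1)
      = (y / (2 * k)) * ∫ z in (-1:ℝ)..1, Real.exp (y * z) * (1 - z ^ 2) ^ k := by
  set G : ℝ → ℝ := fun z => Real.exp (y * z) * (1 - z ^ 2) ^ k with hG
  set g : ℝ → ℝ := fun z =>
    y * (Real.exp (y * z) * (1 - z ^ 2) ^ k)
      - 2 * k * (Real.exp (y * z) * z * (1 - z ^ 2) ^ (k - 1)) with hg
  have hcont : ContinuousOn G (Icc (-1:ℝ) 1) :=
    ((Real.continuous_exp.comp (continuous_const.mul continuous_id)).mul (cont_powk hk)).continuousOn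
  have hderiv : ∀ x ∈ Ioo (-1:ℝ) 1, HasDerivWithinAt G (g x) (Ioi x) x := by
    intro x hx
    have hx0 : 1 - x ^ 2 ≠ 0 := by nlinarith [hx.1, hx.2]
    have h1 : HasDerivAt (fun z : ℝ => Real.exp (y * z)) (Real.exp (y * x) * y) x :=
      (Real.hasDerivAt_exp (y * x)).comp x (by simpa using (hasDerivAt_id x).const_mul y)
    have hi : HasDerivAt (fun z : ℝ => 1 - z ^ 2) (-(2 * x)) x := by
      simpa using ((hasDerivAt_pow 2 x).const_sub 1)
    have h2 : HasDerivAt (fun z : ℝ => (1 - z ^ 2) ^ k)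
        (-(2 * x) * k * (1 - x ^ 2) ^ (k - 1)) x := hi.rpow_const (Or.inl hx0)
    have h3 : HasDerivAt (fun z : ℝ => Real.exp (y * z) * (1 - z ^ 2) ^ k) _ x := h1.mul h2
    convert h3.hasDerivWithinAt using 1
    · rfl
    · rfl
    simp only [hg]; ring
  have hint : IntervalIntegrable g volume (-1) 1 :=
    ((intB hk y).const_mul y).sub ((intZ hk y).const_mul (2 * k))
  have h0 : ∫ z in (-1:ℝ)..1, g z = G 1 - G (-1) :=
    integral_eq_sub_of_hasDeriv_right_of_le (by norm_num) hcont hderiv hint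
  have hG1 : G 1 = 0 := by simp [hG, Real.zero_rpow hk.ne']
  have hGm1 : G (-1) = 0 := by
    simp only [hG]
    norm_num [Real.zero_rpow hk.ne']
  rw [hG1, hGm1, sub_zero] at h0
  simp only [hg] at h0
  rw [integral_sub ((intB hk y).const_mul y) ((intZ hk y).const_mul (2 * k)),
    intervalIntegral.integral_const_mul, intervalIntegral.integral_const_mul] at h0
  have hk2 : (2 : ℝ) * k ≠ 0 := by positivity
  rw [hG, div_mul_eq_mul_div, eq_div_iff hk2]
  linarith [h0]

lemma split_lemma {k : ℝ} (hk : 0 < k) (y : ℝ) :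
    ∫ z in (-1:ℝ)..1, Real.exp (z * y) * (1 - z) ^ (k - 1) * (1 + z) ^ k
      = (∫ z in (-1:ℝ)..1, Real.exp (y * z) * (1 - z ^ 2) ^ (k - 1))
        + (y / (2 * k)) * ∫ z in (-1:ℝ)..1, Real.exp (y * z) * (1 - z ^ 2) ^ k := by
  rw [← ibp hk y, ← integral_add (intA hk y) (intZ hk y)]
  apply integral_congr
  intro z hz
  rw [Set.uIcc_of_le (by norm_num : (-1:ℝ) ≤ 1)] at hz
  obtain ⟨hz0, hz1⟩ := hz
  simp only
  rcases eq_or_lt_of_le hz0 with h | h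
  · rw [← h]
    norm_num [Real.zero_rpow hk.ne']
  · have h2 : (0:ℝ) < 1 + z := by linarith
    have h1 : (0:ℝ) ≤ 1 - z := by linarith
    have hpow : (1 - z ^ 2 : ℝ) ^ (k - 1) = (1 - z) ^ (k - 1) * (1 + z) ^ (k - 1) := by
      rw [show (1:ℝ) - z ^ 2 = (1 - z) * (1 + z) by ring, Real.mul_rpow h1 h2.le]
    have hppp : (1 + z : ℝ) ^ (k - 1) * (1 + z) = (1 + z) ^ k := by
      rw [← Real.rpow_add_one h2.ne']; ring_nf
    rw [hpow, show z * y = y * z by ring]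
    calc Real.exp (y * z) * (1 - z) ^ (k - 1) * (1 + z) ^ k
        = Real.exp (y * z) * (1 - z) ^ (k - 1) * ((1 + z) ^ (k - 1) * (1 + z)) := by
          rw [hppp]
      _ = Real.exp (y * z) * ((1 - z) ^ (k - 1) * (1 + z) ^ (k - 1))
            + Real.exp (y * z) * z * ((1 - z) ^ (k - 1) * (1 + z) ^ (k - 1)) := by ring

lemma besselJ_neg (a y : ℝ) : besselJ a (-y) = besselJ a y := by
  unfold besselJ
  congr 1
  have h := intervalIntegral.integral_comp_neg (a := (-1:ℝ)) (b := 1)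
    (fun z => Real.exp (y * z) * (1 - z ^ 2) ^ (a - 1/2))
  norm_num at h
  rw [← h]
  apply integral_congr
  intro z _
  simp only
  rw [neg_mul]

lemma erk1_eq_bessel {k : ℝ} (hk : 0 < k) (x v : ℝ) :
    Erk1 k x v = besselJ (k - 1/2) (x * v)
      + (x * v / (2 * k + 1)) * besselJ (k + 1/2) (x * v) := by
  have hΓk : Real.Gamma k ≠ 0 := (Real.Gamma_pos_of_pos hk).ne'
  have hΓk2 : Real.Gamma (k + 1/2) ≠ 0 := (Real.Gamma_pos_of_pos (by linarith)).ne'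
  have hπ : Real.sqrt Real.pi ≠ 0 := by positivity
  unfold Erk1 besselJ
  rw [show k - 1/2 + 1 = k + 1/2 by ring, show k - 1/2 + 1/2 = k by ring,
    show k - 1/2 - 1/2 = k - 1 by ring,
    show k + 1/2 + 1 = (k + 1/2) + 1 by ring,
    show k + 1/2 + 1/2 = k + 1 by ring, show k + 1/2 - 1/2 = k by ring,
    Real.Gamma_add_one (by positivity : k + 1/2 ≠ 0),
    Real.Gamma_add_one hk.ne']
  have hsplit := split_lemma hk (x * v)
  rw [show (fun z : ℝ => Real.exp (z * x * v) * (1 - z) ^ (k - 1) * (1 + z) ^ k)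
      = (fun z : ℝ => Real.exp (z * (x * v)) * (1 - z) ^ (k - 1) * (1 + z) ^ k) by
    funext z; rw [mul_assoc z x v]]
  rw [hsplit]
  set A := ∫ z in (-1:ℝ)..1, Real.exp (x * v * z) * (1 - z ^ 2) ^ (k - 1)
  set B := ∫ z in (-1:ℝ)..1, Real.exp (x * v * z) * (1 - z ^ 2) ^ k
  have hk1 : (2 : ℝ) * k + 1 ≠ 0 := by positivity
  field_simp

lemma erk1_neg_eq_bessel {k : ℝ} (hk : 0 < k) (x v : ℝ) :
    Erk1 k (-x) v = besselJ (k - 1/2) (x * v)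
      - (x * v / (2 * k + 1)) * besselJ (k + 1/2) (x * v) := by
  rw [erk1_eq_bessel hk (-x) v, show -x * v = -(x * v) by ring, besselJ_neg, besselJ_neg]
  ring

set_option maxHeartbeats 2000000

/-- Theorem 3.1, formula (Amri1): Amri's Bessel-type integral formula
equals the new rank-one-kernel formula for the `A₂` Dunkl kernel. -/
theorem amri_formula_eq_EkA2 (k : ℝ) (hk : 0 < k) (l1 l2 l3 x1 x2 x3 : ℝ)
    (hl : l1 + l2 + l3 = 0) (hl12 : l2 < l1) (hl23 : l3 < l2)
    (hx : x1 + x2 + x3 = 0) :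
    (3 * Real.Gamma (3 * k) / (Vlam l1 l2 l3 ^ (2 * k) * Real.Gamma k ^ 2)) *
      (∫ n2 in l3..l2, ∫ n1 in l2..l1,
        ((l1 - l2) * (n1 - n2) * besselJ (k - 1/2) ((x1 - x2) * (n1 - n2) / 2)
          + ((l1 - l2) * (n1 - n2) - 2 * (l1 - n1) * (l2 - n2))
            * ((x1 - x2) * (n1 - n2) / (2 * (2 * k + 1)))
            * besselJ (k + 1/2) ((x1 - x2) * (n1 - n2) / 2))
        * ((n1 - l3) * (n2 - l3)) * Real.exp ((x1 + x2 - 2 * x3) * (n1 + n2) / 2)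
        * Wk k l1 l2 l3 n1 n2)
    = EkA2 k x1 x2 x3 l1 l2 l3 := by
  unfold EkA2
  congr 1
  apply integral_congr
  intro n2 _
  simp only
  apply integral_congr
  intro n1 _
  simp only
  rw [show -(x1 - x2) / 2 = -((x1 - x2) / 2) by ring,
    erk1_eq_bessel hk ((x1 - x2) / 2) (n1 - n2),
    erk1_neg_eq_bessel hk ((x1 - x2) / 2) (n1 - n2),
    show (x1 - x2) / 2 * (n1 - n2) = (x1 - x2) * (n1 - n2) / 2 by ring,
    show (x1 - x2) * (n1 - n2) / (2 * (2 * k + 1))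
      = (x1 - x2) * (n1 - n2) / 2 / (2 * k + 1) from (div_div _ _ _).symm]
  set J1 := besselJ (k - 1/2) ((x1 - x2) * (n1 - n2) / 2)
  set J2 := besselJ (k + 1/2) ((x1 - x2) * (n1 - n2) / 2)
  set E := Real.exp ((x1 + x2 - 2 * x3) * (n1 + n2) / 2)
  set W := Wk k l1 l2 l3 n1 n2
  ring
end

section
/- (Lemma 5.1, formula (alpha+).) Uniformly over all λ ∈ C⁺ and all X ∈ a with x1 ≥ x2, one has V(λ)^{2k}·E_k(X,λ) ≍ ∫_{λ3}^{λ2} ∫_{λ2}^{λ1} [(ν1−ν2)(α_λ + α_X(ν1−λ2)(λ1−ν2)) / (1+α_X(ν1−ν2))^{k+1}] (ν1−λ3)(ν2−λ3) e^{(x1−x3)ν1 + (x2−x3)ν2} W_k(λ,ν) dν1 dν2. -/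
open Real MeasureTheory

open MeasureTheory intervalIntegral Set


noncomputable def Fk (k t : ℝ) : ℝ :=
  ∫ z in (-1:ℝ)..1, Real.exp (z * t) * (1 - z) ^ (k - 1) * (1 + z) ^ k

lemma cont_rpow_pos {k : ℝ} (hk : 0 < k) : Continuous fun x : ℝ => x ^ k := by
  rw [continuous_iff_continuousAt]
  intro x
  exact Real.continuousAt_rpow_const x k (Or.inr hk.le)

lemma II_congr {f g : ℝ → ℝ} {a b : ℝ} (h : IntervalIntegrable f volume a b)
    (he : ∀ x, f x = g x) : IntervalIntegrable g volume a b := by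
  have : f = g := funext he
  rwa [this] at h

lemma II_sub_rpow {r : ℝ} (hr : -1 < r) (c a b : ℝ) :
    IntervalIntegrable (fun z : ℝ => (c - z) ^ r) volume a b := by
  have h := (intervalIntegrable_rpow' (a := c - a) (b := c - b) hr).comp_sub_left c
  simpa using h

lemma II_add_rpow {r : ℝ} (hr : -1 < r) (c a b : ℝ) :
    IntervalIntegrable (fun z : ℝ => (c + z) ^ r) volume a b := by
  have h := (intervalIntegrable_rpow' (a := c + a) (b := c + b) hr).comp_add_left c
  simpa using h

lemma int_sub_rpow {r : ℝ} (hr : -1 < r) (c a b : ℝ) :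
    ∫ z in a..b, (c - z) ^ r = ((c - a) ^ (r+1) - (c - b) ^ (r+1)) / (r+1) := by
  have h := intervalIntegral.integral_comp_sub_left (a := a) (b := b) (fun x : ℝ => x ^ r) c
  rw [h, integral_rpow (Or.inl hr)]

lemma int_add_rpow {r : ℝ} (hr : -1 < r) (c a b : ℝ) :
    ∫ z in a..b, (c + z) ^ r = ((c + b) ^ (r+1) - (c + a) ^ (r+1)) / (r+1) := by
  have h := intervalIntegral.integral_comp_add_left (a := a) (b := b) (fun x : ℝ => x ^ r) c
  rw [h, integral_rpow (Or.inl hr)]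

lemma w_II {k : ℝ} (hk : 0 < k) (t a b : ℝ) :
    IntervalIntegrable (fun z : ℝ => Real.exp (z * t) * (1 - z) ^ (k - 1) * (1 + z) ^ k)
      volume a b := by
  have h1 : IntervalIntegrable (fun z : ℝ => (1 - z) ^ (k - 1)) volume a b :=
    II_sub_rpow (by linarith) 1 a b
  have h2 : ContinuousOn (fun z : ℝ => Real.exp (z * t) * (1 + z) ^ k) (Set.uIcc a b) :=
    (((Real.continuous_exp.comp (continuous_id.mul continuous_const))).mul
      ((cont_rpow_pos hk).comp (continuous_const.add continuous_id))).continuousOn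
  exact II_congr (h1.mul_continuousOn h2) (fun x => by ring)

lemma w_nonneg {k t : ℝ} {z : ℝ} (h1 : -1 ≤ z) (h2 : z ≤ 1) :
    0 ≤ Real.exp (z * t) * (1 - z) ^ (k - 1) * (1 + z) ^ k :=
  mul_nonneg (mul_nonneg (Real.exp_pos _).le (Real.rpow_nonneg (by linarith) _))
    (Real.rpow_nonneg (by linarith) _)

lemma Fk_cont {k : ℝ} (hk : 0 < k) : Continuous (Fk k) := by
  rw [continuous_iff_continuousAt]
  intro t0
  apply intervalIntegral.continuousAt_of_dominated_interval
    (bound := fun z => Real.exp (|t0| + 1) * ((1 - z) ^ (k - 1) * (1 + z) ^ k))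
  · filter_upwards with t
    apply Measurable.aestronglyMeasurable
    fun_prop
  · have hball : Metric.ball t0 1 ∈ nhds t0 := Metric.ball_mem_nhds t0 one_pos
    filter_upwards [hball] with t ht
    filter_upwards with z hz
    rw [Set.uIoc_of_le (by norm_num : (-1:ℝ) ≤ 1)] at hz
    have hz1 : -1 < z := hz.1
    have hz2 : z ≤ 1 := hz.2
    rw [Real.norm_eq_abs, abs_of_nonneg (w_nonneg hz1.le hz2)]
    have h1 : z * t ≤ |t0| + 1 := by
      have : |z * t| ≤ |t| := by
        rw [abs_mul]
        have : |z| ≤ 1 := abs_le.2 ⟨hz1.le, hz2⟩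
        nlinarith [abs_nonneg t]
      have h2 : |t| ≤ |t0| + 1 := by
        have := mem_ball_iff_norm.1 ht
        rw [Real.norm_eq_abs] at this
        calc |t| = |t0 + (t - t0)| := by ring_nf
        _ ≤ |t0| + |t - t0| := abs_add_le _ _
        _ ≤ |t0| + 1 := by linarith [this.le]
      linarith [le_abs_self (z * t)]
    have := Real.exp_le_exp.2 h1
    have hnn : 0 ≤ (1 - z) ^ (k - 1) * (1 + z) ^ k :=
      mul_nonneg (Real.rpow_nonneg (by linarith) _) (Real.rpow_nonneg (by linarith) _)
    calc Real.exp (z * t) * (1 - z) ^ (k - 1) * (1 + z) ^ k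
        = Real.exp (z * t) * ((1 - z) ^ (k - 1) * (1 + z) ^ k) := by ring
      _ ≤ Real.exp (|t0| + 1) * ((1 - z) ^ (k - 1) * (1 + z) ^ k) :=
          mul_le_mul_of_nonneg_right this hnn
  · exact (II_congr (w_II hk 0 (-1) 1) (fun z => by simp)).const_mul _
  · filter_upwards with z _
    exact ((Real.continuous_exp.comp (continuous_const.mul continuous_id)).mul
      continuous_const).mul continuous_const |>.continuousAt


lemma exp_mul_rpow_le (q : ℝ) (hq : 0 ≤ q) :
    ∃ C : ℝ, 0 < C ∧ ∀ t : ℝ, 0 ≤ t → Real.exp (-t) * (1 + 2*t) ^ q ≤ C := by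
  set n : ℕ := ⌈q⌉₊ + 1 with hn
  refine ⟨3 ^ q * (n:ℝ) ^ n + 3 ^ q + 1, by positivity, fun t ht => ?_⟩
  rcases le_or_gt t 1 with h1 | h1
  · have hr : (1 + 2*t) ^ q ≤ 3 ^ q := Real.rpow_le_rpow (by linarith) (by linarith) hq
    have he : Real.exp (-t) ≤ 1 := Real.exp_le_one_iff.2 (by linarith)
    have h0 : (0:ℝ) ≤ (1 + 2*t) ^ q := Real.rpow_nonneg (by linarith) _
    nlinarith [Real.rpow_nonneg (by norm_num : (0:ℝ) ≤ 3) q, pow_nonneg (Nat.cast_nonneg n : (0:ℝ) ≤ n) n]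
  · have ht0 : (0:ℝ) < t := by linarith
    have hD : (1 + 2*t : ℝ) ≤ 3 * t := by linarith
    have h2 : (1 + 2*t) ^ q ≤ (3*t) ^ q := Real.rpow_le_rpow (by linarith) hD hq
    have h3 : (3*t:ℝ) ^ q = 3 ^ q * t ^ q := Real.mul_rpow (by norm_num) ht0.le
    have hqn : q ≤ (n:ℝ) := by
      have := Nat.le_ceil q
      push_cast [hn]
      push_cast at this
      linarith
    have h4 : t ^ q ≤ t ^ (n:ℝ) := Real.rpow_le_rpow_of_exponent_le h1.le hqn
    have h5 : t ^ (n:ℝ) = t ^ n := Real.rpow_natCast t n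
    have hnpos : (0:ℝ) < n := by positivity
    have h6 : t ^ n ≤ (n:ℝ) ^ n * Real.exp t := by
      have hx : t / n ≤ Real.exp (t / n) := by
        have := Real.add_one_le_exp (t / n)
        linarith
      have h7 : t ≤ (n:ℝ) * Real.exp (t / n) := by
        rw [div_le_iff₀ hnpos] at hx
        linarith [hx]
      calc t ^ n ≤ ((n:ℝ) * Real.exp (t / n)) ^ n := pow_le_pow_left₀ ht0.le h7 n
        _ = (n:ℝ) ^ n * (Real.exp (t / n)) ^ n := mul_pow _ _ n
        _ = (n:ℝ) ^ n * Real.exp t := by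
            rw [← Real.exp_nat_mul]
            congr 1
            field_simp
    have hexp : Real.exp (-t) * Real.exp t = 1 := by
      rw [← Real.exp_add]; simp
    have hchain : Real.exp (-t) * (1 + 2*t) ^ q ≤ Real.exp (-t) * (3 ^ q * ((n:ℝ) ^ n * Real.exp t)) := by
      apply mul_le_mul_of_nonneg_left _ (Real.exp_pos _).le
      calc (1 + 2*t) ^ q ≤ 3 ^ q * t ^ q := by rw [← h3]; exact h2
        _ ≤ 3 ^ q * ((n:ℝ) ^ n * Real.exp t) := by
            apply mul_le_mul_of_nonneg_left _ (Real.rpow_nonneg (by norm_num) q)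
            calc t ^ q ≤ t ^ n := h5 ▸ h4
              _ ≤ (n:ℝ) ^ n * Real.exp t := h6
    have : Real.exp (-t) * (3 ^ q * ((n:ℝ) ^ n * Real.exp t)) = 3 ^ q * (n:ℝ) ^ n := by
      rw [show Real.exp (-t) * (3 ^ q * ((n:ℝ) ^ n * Real.exp t))
          = 3 ^ q * (n:ℝ) ^ n * (Real.exp (-t) * Real.exp t) by ring, hexp, mul_one]
    rw [this] at hchain
    nlinarith [Real.rpow_nonneg (by norm_num : (0:ℝ) ≤ 3) q]

lemma laplace_bound (p b : ℝ) (hp : 0 < p) (hb : 0 < b) :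
    ∃ C : ℝ, 0 < C ∧ ∀ t : ℝ, 0 ≤ t →
      (∫ s in (0:ℝ)..b, Real.exp (-(s*t)) * s ^ (p-1)) * (1 + 2*t) ^ p ≤ C := by
  refine ⟨b ^ p / p * 3 ^ p + Real.Gamma p * 3 ^ p + 1, by
      have := Real.Gamma_pos_of_pos hp
      positivity, fun t ht => ?_⟩
  have hII : IntervalIntegrable (fun s : ℝ => Real.exp (-(s*t)) * s ^ (p-1)) volume 0 b := by
    have h1 := intervalIntegrable_rpow' (a := (0:ℝ)) (b := b) (by linarith : (-1:ℝ) < p - 1)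
    have h2 : ContinuousOn (fun s : ℝ => Real.exp (-(s*t))) (Set.uIcc 0 b) :=
      (Real.continuous_exp.comp (continuous_id.mul continuous_const).neg).continuousOn
    exact II_congr (h1.mul_continuousOn h2) (fun x => by ring)
  have hInn : 0 ≤ ∫ s in (0:ℝ)..b, Real.exp (-(s*t)) * s ^ (p-1) := by
    apply intervalIntegral.integral_nonneg hb.le
    intro s hs
    exact mul_nonneg (Real.exp_pos _).le (Real.rpow_nonneg hs.1 _)
  have hDpos : (0:ℝ) ≤ (1 + 2*t) ^ p := Real.rpow_nonneg (by linarith) _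
  rcases le_or_gt t 1 with h1 | h1
  · have hle : (∫ s in (0:ℝ)..b, Real.exp (-(s*t)) * s ^ (p-1)) ≤ b ^ p / p := by
      have hmono : (∫ s in (0:ℝ)..b, Real.exp (-(s*t)) * s ^ (p-1)) ≤ ∫ s in (0:ℝ)..b, s ^ (p-1) := by
        apply intervalIntegral.integral_mono_on hb.le hII
          (intervalIntegrable_rpow' (by linarith))
        intro s hs
        have : Real.exp (-(s*t)) ≤ 1 := Real.exp_le_one_iff.2 (by nlinarith [hs.1])
        nlinarith [Real.rpow_nonneg hs.1 (p-1)]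
      have : (∫ s in (0:ℝ)..b, s ^ (p-1)) = b ^ p / p := by
        rw [integral_rpow (Or.inl (by linarith))]
        rw [show p - 1 + 1 = p by ring, Real.zero_rpow (ne_of_gt hp), sub_zero]
      linarith [hmono, this.le, this.ge]
    have hD3 : (1 + 2*t) ^ p ≤ 3 ^ p := Real.rpow_le_rpow (by linarith) (by linarith) hp.le
    nlinarith [Real.rpow_nonneg (by norm_num : (0:ℝ) ≤ 3) p, Real.Gamma_pos_of_pos hp]
  · have ht0 : (0:ℝ) < t := by linarith
    have key : (∫ s in (0:ℝ)..b, Real.exp (-(s*t)) * s ^ (p-1))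
        = t ^ (1-p) * (t⁻¹ * ∫ r in (0:ℝ)..(b*t), Real.exp (-r) * r ^ (p-1)) := by
      have step1 : (∫ s in (0:ℝ)..b, Real.exp (-(s*t)) * s ^ (p-1))
          = ∫ s in (0:ℝ)..b, t ^ (1-p) * (Real.exp (-(s*t)) * (s*t) ^ (p-1)) := by
        apply intervalIntegral.integral_congr
        intro s hs
        rw [Set.uIcc_of_le hb.le] at hs
        have hs0 : 0 ≤ s := hs.1
        dsimp only
        rw [Real.mul_rpow hs0 ht0.le]
        rw [show t ^ (1-p) * (Real.exp (-(s*t)) * (s ^ (p-1) * t ^ (p-1)))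
            = Real.exp (-(s*t)) * s ^ (p-1) * (t ^ (1-p) * t ^ (p-1)) by ring]
        rw [← Real.rpow_add ht0]
        norm_num
      rw [step1, intervalIntegral.integral_const_mul]
      congr 1
      have := intervalIntegral.integral_comp_mul_right (a := (0:ℝ)) (b := b)
        (fun r : ℝ => Real.exp (-r) * r ^ (p-1)) (ne_of_gt ht0)
      simpa using this
    have hG : (∫ r in (0:ℝ)..(b*t), Real.exp (-r) * r ^ (p-1)) ≤ Real.Gamma p := by
      rw [intervalIntegral.integral_of_le (by positivity), Real.Gamma_eq_integral hp]
      apply MeasureTheory.setIntegral_mono_set (Real.GammaIntegral_convergent hp)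
      · rw [Filter.EventuallyLE]
        refine (ae_restrict_iff' measurableSet_Ioi).2 (Filter.Eventually.of_forall fun x hx => ?_)
        have : (0:ℝ) < x := hx
        positivity
      · exact HasSubset.Subset.eventuallyLE Ioc_subset_Ioi_self
    have hGnn : 0 ≤ ∫ r in (0:ℝ)..(b*t), Real.exp (-r) * r ^ (p-1) := by
      apply intervalIntegral.integral_nonneg (by positivity)
      intro r hr
      exact mul_nonneg (Real.exp_pos _).le (Real.rpow_nonneg hr.1 _)
    have hIle : (∫ s in (0:ℝ)..b, Real.exp (-(s*t)) * s ^ (p-1)) ≤ t ^ (-p) * Real.Gamma p := by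
      rw [key]
      have h2 : t ^ (1-p) * (t⁻¹ * ∫ r in (0:ℝ)..(b*t), Real.exp (-r) * r ^ (p-1))
          ≤ t ^ (1-p) * (t⁻¹ * Real.Gamma p) := by
        apply mul_le_mul_of_nonneg_left _ (Real.rpow_nonneg ht0.le _)
        exact mul_le_mul_of_nonneg_left hG (by positivity)
      refine le_trans h2 (le_of_eq ?_)
      rw [← Real.rpow_neg_one t, ← mul_assoc, ← Real.rpow_add ht0,
        show (1:ℝ) - p + -1 = -p by ring]
    have hDle : (1 + 2*t) ^ p ≤ 3 ^ p * t ^ p := by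
      rw [← Real.mul_rpow (by norm_num) ht0.le]
      exact Real.rpow_le_rpow (by linarith) (by linarith) hp.le
    have hfin : (t ^ (-p) * Real.Gamma p) * (3 ^ p * t ^ p) = Real.Gamma p * 3 ^ p := by
      rw [show (t ^ (-p) * Real.Gamma p) * (3 ^ p * t ^ p)
          = Real.Gamma p * 3 ^ p * (t ^ (-p) * t ^ p) by ring, ← Real.rpow_add ht0]
      norm_num
    have := mul_le_mul hIle hDle hDpos
      (mul_nonneg (Real.rpow_nonneg ht0.le _) (Real.Gamma_pos_of_pos hp).le)
    rw [hfin] at this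
    have hb3 : 0 ≤ b ^ p / p * 3 ^ p := by positivity
    linarith

lemma Fk_lower_plus {k : ℝ} (hk : 0 < k) {t : ℝ} (ht : 0 ≤ t) :
    (Real.exp (-1) / k) * Real.exp t ≤ Fk k t * (1 + 2*t) ^ k := by
  set D : ℝ := 1 + 2*t with hD
  have hDpos : 0 < D := by simp only [hD]; linarith
  set m : ℝ := D⁻¹ with hm
  have hm0 : 0 < m := inv_pos.2 hDpos
  have hmD : m * D = 1 := inv_mul_cancel₀ (ne_of_gt hDpos)
  have hm1 : m ≤ 1 := by nlinarith
  have hmt : m * t ≤ 1 := by nlinarith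
  have hsplit : Fk k t = (∫ z in (-1:ℝ)..(1-m), Real.exp (z*t) * (1-z)^(k-1) * (1+z)^k)
      + ∫ z in (1-m)..(1:ℝ), Real.exp (z*t) * (1-z)^(k-1) * (1+z)^k :=
    (intervalIntegral.integral_add_adjacent_intervals (w_II hk t (-1) (1-m)) (w_II hk t (1-m) 1)).symm
  have hpart1 : 0 ≤ ∫ z in (-1:ℝ)..(1-m), Real.exp (z*t) * (1-z)^(k-1) * (1+z)^k := by
    apply intervalIntegral.integral_nonneg (by linarith)
    intro z hz
    exact w_nonneg hz.1 (by linarith [hz.2])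
  have hpart2 : Real.exp (t-1) * (m^k / k)
      ≤ ∫ z in (1-m)..(1:ℝ), Real.exp (z*t) * (1-z)^(k-1) * (1+z)^k := by
    have hcomp : (∫ z in (1-m)..(1:ℝ), Real.exp (t-1) * (1-z)^(k-1)) = Real.exp (t-1) * (m^k / k) := by
      rw [intervalIntegral.integral_const_mul, int_sub_rpow (by linarith) 1 (1-m) 1]
      rw [show (1:ℝ) - (1-m) = m by ring, show (1:ℝ) - 1 = 0 by ring,
        show k - 1 + 1 = k by ring, Real.zero_rpow (ne_of_gt hk), sub_zero]
    rw [← hcomp]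
    apply intervalIntegral.integral_mono_on (by linarith)
      ((II_sub_rpow (by linarith) 1 (1-m) 1).const_mul _) (w_II hk t (1-m) 1)
    intro z hz
    have h1k : (0:ℝ) ≤ (1-z)^(k-1) := Real.rpow_nonneg (by linarith [hz.2]) _
    have hzt : t - 1 ≤ z * t := by nlinarith [mul_le_mul_of_nonneg_right hz.1 ht]
    have he : Real.exp (t-1) ≤ Real.exp (z*t) := Real.exp_le_exp.2 (by nlinarith [hz.1])
    have h2 : 1 ≤ (1+z)^k := Real.one_le_rpow (by linarith [hz.1]) hk.le
    calc Real.exp (t-1) * (1-z)^(k-1) ≤ Real.exp (z*t) * (1-z)^(k-1) :=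
          mul_le_mul_of_nonneg_right he h1k
      _ ≤ Real.exp (z*t) * (1-z)^(k-1) * (1+z)^k :=
          le_mul_of_one_le_right (mul_nonneg (Real.exp_pos _).le h1k) h2
  have hFk : Real.exp (t-1) * (m^k / k) ≤ Fk k t := by rw [hsplit]; linarith
  have hDk : (0:ℝ) ≤ D ^ k := Real.rpow_nonneg hDpos.le _
  have hmDk : m ^ k * D ^ k = 1 := by
    rw [← Real.mul_rpow hm0.le hDpos.le, hmD, Real.one_rpow]
  have e1 : Real.exp (t-1) = Real.exp (-1) * Real.exp t := by
    rw [← Real.exp_add]; ring_nf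
  have := mul_le_mul_of_nonneg_right hFk hDk
  calc (Real.exp (-1) / k) * Real.exp t
      = Real.exp (t-1) * (m^k / k) * D^k := by
        rw [e1, show Real.exp (-1) * Real.exp t * (m^k/k) * D^k
          = (Real.exp (-1) / k * Real.exp t) * (m^k * D^k) by ring, hmDk, mul_one]
    _ ≤ Fk k t * D ^ k := this

lemma Fk_lower_minus {k : ℝ} (hk : 0 < k) {t : ℝ} (ht : 0 ≤ t) :
    (min 1 (2^(k-1)) * Real.exp (-1) / (k+1)) * Real.exp t ≤ Fk k (-t) * (1 + 2*t) ^ (k+1) := by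
  set c1 : ℝ := min 1 (2^(k-1)) with hc1
  have hc1pos : 0 < c1 := lt_min one_pos (Real.rpow_pos_of_pos two_pos _)
  set D : ℝ := 1 + 2*t with hD
  have hDpos : 0 < D := by simp only [hD]; linarith
  set m : ℝ := D⁻¹ with hm
  have hm0 : 0 < m := inv_pos.2 hDpos
  have hmD : m * D = 1 := inv_mul_cancel₀ (ne_of_gt hDpos)
  have hm1 : m ≤ 1 := by nlinarith
  have hmt : m * t ≤ 1 := by nlinarith
  have hsplit : Fk k (-t) = (∫ z in (-1:ℝ)..(-1+m), Real.exp (z*(-t)) * (1-z)^(k-1) * (1+z)^k)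
      + ∫ z in (-1+m)..(1:ℝ), Real.exp (z*(-t)) * (1-z)^(k-1) * (1+z)^k :=
    (intervalIntegral.integral_add_adjacent_intervals (w_II hk (-t) (-1) (-1+m)) (w_II hk (-t) (-1+m) 1)).symm
  have hpart2 : 0 ≤ ∫ z in (-1+m)..(1:ℝ), Real.exp (z*(-t)) * (1-z)^(k-1) * (1+z)^k := by
    apply intervalIntegral.integral_nonneg (by linarith)
    intro z hz
    exact w_nonneg (by linarith [hz.1]) hz.2
  have hpart1 : (c1 * Real.exp (t-1)) * (m^(k+1) / (k+1))
      ≤ ∫ z in (-1:ℝ)..(-1+m), Real.exp (z*(-t)) * (1-z)^(k-1) * (1+z)^k := by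
    have hcomp : (∫ z in (-1:ℝ)..(-1+m), (c1 * Real.exp (t-1)) * (1+z)^k)
        = (c1 * Real.exp (t-1)) * (m^(k+1) / (k+1)) := by
      rw [intervalIntegral.integral_const_mul, int_add_rpow (by linarith) 1 (-1) (-1+m)]
      rw [show (1:ℝ) + (-1+m) = m by ring, show (1:ℝ) + (-1) = 0 by ring,
        Real.zero_rpow (by positivity : k + 1 ≠ 0), sub_zero]
    rw [← hcomp]
    apply intervalIntegral.integral_mono_on (by linarith)
      (((((cont_rpow_pos hk).comp (continuous_const.add continuous_id)).continuousOn).intervalIntegrable).const_mul _)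
      (w_II hk (-t) (-1) (-1+m))
    intro z hz
    have hz2 : z ≤ -1 + m := hz.2
    have hz1 : -1 ≤ z := hz.1
    have h1z : 1 ≤ 1 - z := by linarith
    have h2z : 1 - z ≤ 2 := by linarith
    have he : Real.exp (t-1) ≤ Real.exp (z*(-t)) := by
      apply Real.exp_le_exp.2
      nlinarith [mul_le_mul_of_nonneg_right hz2 ht]
    have hrp : c1 ≤ (1-z)^(k-1) := by
      rcases le_or_gt (k-1) 0 with hneg | hpos
      · calc c1 ≤ 2^(k-1) := min_le_right _ _
          _ ≤ (1-z)^(k-1) := Real.rpow_le_rpow_of_nonpos (by linarith) h2z hneg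
      · calc c1 ≤ 1 := min_le_left _ _
          _ ≤ (1-z)^(k-1) := Real.one_le_rpow h1z hpos.le
    have hker : 0 ≤ (1+z)^k := Real.rpow_nonneg (by linarith) _
    have : c1 * Real.exp (t-1) ≤ Real.exp (z*(-t)) * (1-z)^(k-1) := by
      calc c1 * Real.exp (t-1) = Real.exp (t-1) * c1 := by ring
        _ ≤ Real.exp (z*(-t)) * (1-z)^(k-1) := mul_le_mul he hrp hc1pos.le (Real.exp_pos _).le
    exact mul_le_mul_of_nonneg_right this hker
  have hFk : (c1 * Real.exp (t-1)) * (m^(k+1) / (k+1)) ≤ Fk k (-t) := by rw [hsplit]; linarith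
  have hDk : (0:ℝ) ≤ D ^ (k+1) := Real.rpow_nonneg hDpos.le _
  have hmDk : m ^ (k+1) * D ^ (k+1) = 1 := by
    rw [← Real.mul_rpow hm0.le hDpos.le, hmD, Real.one_rpow]
  have e1 : Real.exp (t-1) = Real.exp (-1) * Real.exp t := by
    rw [← Real.exp_add]; ring_nf
  have hmul := mul_le_mul_of_nonneg_right hFk hDk
  calc (c1 * Real.exp (-1) / (k+1)) * Real.exp t
      = (c1 * Real.exp (t-1)) * (m^(k+1) / (k+1)) * D^(k+1) := by
        rw [e1, show c1 * (Real.exp (-1) * Real.exp t) * (m^(k+1)/(k+1)) * D^(k+1)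
          = (c1 * Real.exp (-1) / (k+1) * Real.exp t) * (m^(k+1) * D^(k+1)) by ring, hmDk, mul_one]
    _ ≤ Fk k (-t) * D ^ (k+1) := hmul

lemma Fk_upper_plus {k : ℝ} (hk : 0 < k) :
    ∃ C : ℝ, 0 < C ∧ ∀ t : ℝ, 0 ≤ t → Fk k t * (1 + 2*t) ^ k ≤ C * Real.exp t := by
  obtain ⟨CL, hCL, hCLb⟩ := laplace_bound k 2 hk two_pos
  refine ⟨2^k * CL, by positivity, fun t ht => ?_⟩
  set D : ℝ := 1 + 2*t with hD
  have hDpos : 0 < D := by simp only [hD]; linarith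
  have step1 : Fk k t ≤ ∫ z in (-1:ℝ)..1, Real.exp (z*t) * (1-z)^(k-1) * 2^k := by
    apply intervalIntegral.integral_mono_on (by norm_num) (w_II hk t (-1) 1)
    · have hc : ContinuousOn (fun z : ℝ => Real.exp (z*t) * (2:ℝ)^k) (Set.uIcc (-1:ℝ) 1) := by
        apply Continuous.continuousOn
        exact (Real.continuous_exp.comp (continuous_id.mul continuous_const)).mul continuous_const
      exact II_congr ((II_sub_rpow (by linarith : (-1:ℝ) < k-1) 1 (-1) 1).mul_continuousOn hc)
        (fun z => by ring)
    · intro z hz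
      have h1 : (1+z)^k ≤ 2^k := Real.rpow_le_rpow (by linarith [hz.1]) (by linarith [hz.2]) hk.le
      have h0 : 0 ≤ Real.exp (z*t) * (1-z)^(k-1) :=
        mul_nonneg (Real.exp_pos _).le (Real.rpow_nonneg (by linarith [hz.2]) _)
      exact mul_le_mul_of_nonneg_left h1 h0
  have step2 : (∫ z in (-1:ℝ)..1, Real.exp (z*t) * (1-z)^(k-1) * 2^k)
      = 2^k * Real.exp t * ∫ s in (0:ℝ)..2, Real.exp (-(s*t)) * s^(k-1) := by
    have hpt : ∀ z : ℝ, Real.exp (z*t) * (1-z)^(k-1) * (2:ℝ)^k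
        = 2^k * Real.exp t * (Real.exp (-((1-z)*t)) * (1-z)^(k-1)) := by
      intro z
      rw [show z*t = t + -((1-z)*t) by ring, Real.exp_add]
      ring
    rw [show (fun z => Real.exp (z*t) * (1-z)^(k-1) * (2:ℝ)^k)
        = fun z => 2^k * Real.exp t * (Real.exp (-((1-z)*t)) * (1-z)^(k-1)) from funext hpt]
    rw [intervalIntegral.integral_const_mul]
    congr 1
    have h := intervalIntegral.integral_comp_sub_left (a := (-1:ℝ)) (b := 1)
      (fun s : ℝ => Real.exp (-(s*t)) * s^(k-1)) 1
    rw [show (1:ℝ) - 1 = 0 by norm_num, show (1:ℝ) - -1 = 2 by norm_num] at h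
    exact h
  have hIk : (∫ s in (0:ℝ)..2, Real.exp (-(s*t)) * s^(k-1)) * D ^ k ≤ CL := hCLb t ht
  have hDk : (0:ℝ) ≤ D ^ k := Real.rpow_nonneg hDpos.le _
  have h3 := mul_le_mul_of_nonneg_right (step2 ▸ step1) hDk
  calc Fk k t * D^k ≤ (2^k * Real.exp t * ∫ s in (0:ℝ)..2, Real.exp (-(s*t)) * s^(k-1)) * D^k := h3
    _ = 2^k * Real.exp t * ((∫ s in (0:ℝ)..2, Real.exp (-(s*t)) * s^(k-1)) * D^k) := by ring
    _ ≤ 2^k * Real.exp t * CL :=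
        mul_le_mul_of_nonneg_left hIk (by positivity)
    _ = 2^k * CL * Real.exp t := by ring

lemma Fk_upper_minus {k : ℝ} (hk : 0 < k) :
    ∃ C : ℝ, 0 < C ∧ ∀ t : ℝ, 0 ≤ t → Fk k (-t) * (1 + 2*t) ^ (k+1) ≤ C * Real.exp t := by
  obtain ⟨CL, hCL, hCLb⟩ := laplace_bound (k+1) 1 (by linarith) one_pos
  obtain ⟨CE, hCE, hCEb⟩ := exp_mul_rpow_le (k+1) (by linarith)
  set M : ℝ := max 1 (2^(k-1)) with hM
  have hMpos : 0 < M := lt_max_of_lt_left one_pos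
  refine ⟨M * CL + 2^k / k * CE, by positivity, fun t ht => ?_⟩
  set D : ℝ := 1 + 2*t with hD
  have hDpos : 0 < D := by simp only [hD]; linarith
  have hDk : (0:ℝ) ≤ D ^ (k+1) := Real.rpow_nonneg hDpos.le _
  have hcontG : ContinuousOn
      (fun s : ℝ => Real.exp (-(s*t)) * s^k * (2-s)^(k-1)) (Set.Icc (0:ℝ) 1) := by
    apply ContinuousOn.mul
    · exact (((Real.continuous_exp.comp (continuous_id.mul continuous_const).neg)).mul
        (cont_rpow_pos hk)).continuousOn
    · apply ContinuousOn.rpow_const (continuous_const.sub continuous_id).continuousOn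
      intro x hx
      left
      simp only [Pi.sub_apply, id_eq]
      intro hcontra
      have := hx.2
      linarith
  have step1 : Fk k (-t) = Real.exp t * ∫ s in (0:ℝ)..2,
      Real.exp (-(s*t)) * s^k * (2-s)^(k-1) := by
    have key := intervalIntegral.integral_comp_add_right (a := (-1:ℝ)) (b := 1)
      (fun s : ℝ => Real.exp (-(s*t)) * s^k * (2-s)^(k-1)) 1
    have hpt : ∀ z : ℝ, Real.exp (z * -t) * (1-z)^(k-1) * (1+z)^k
        = Real.exp t * (Real.exp (-((z+1)*t)) * (z+1)^k * (2-(z+1))^(k-1)) := by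
      intro z
      rw [show (2:ℝ) - (z+1) = 1 - z by ring, show z * -t = t + -((z+1)*t) by ring,
        Real.exp_add, show z + 1 = 1 + z by ring]
      ring
    have : Fk k (-t) = ∫ z in (-1:ℝ)..1,
        Real.exp t * (Real.exp (-((z+1)*t)) * (z+1)^k * (2-(z+1))^(k-1)) := by
      rw [Fk]
      exact intervalIntegral.integral_congr (fun z _ => hpt z)
    rw [this, intervalIntegral.integral_const_mul]
    congr 1
    rw [show (-1:ℝ) + 1 = 0 by norm_num, show (1:ℝ) + 1 = 2 by norm_num] at key
    exact key
  set J1 : ℝ := ∫ s in (0:ℝ)..1, Real.exp (-(s*t)) * s^k * (2-s)^(k-1) with hJ1def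
  set J2 : ℝ := ∫ s in (1:ℝ)..2, Real.exp (-(s*t)) * s^k * (2-s)^(k-1) with hJ2def
  have hIIJ1 : IntervalIntegrable (fun s : ℝ => Real.exp (-(s*t)) * s^k * (2-s)^(k-1)) volume 0 1 := by
    apply ContinuousOn.intervalIntegrable
    rw [Set.uIcc_of_le (by norm_num : (0:ℝ) ≤ 1)]
    exact hcontG
  have hIIJ2 : IntervalIntegrable (fun s : ℝ => Real.exp (-(s*t)) * s^k * (2-s)^(k-1)) volume 1 2 := by
    have hc : ContinuousOn (fun s : ℝ => Real.exp (-(s*t)) * s^k) (Set.uIcc (1:ℝ) 2) := by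
      apply Continuous.continuousOn
      exact ((Real.continuous_exp.comp (continuous_id.mul continuous_const).neg)).mul
        (cont_rpow_pos hk)
    apply II_congr ((II_sub_rpow (by linarith : (-1:ℝ) < k-1) 2 1 2).mul_continuousOn hc)
    intro s
    ring
  have hsplitJ : (∫ s in (0:ℝ)..2, Real.exp (-(s*t)) * s^k * (2-s)^(k-1)) = J1 + J2 :=
    (intervalIntegral.integral_add_adjacent_intervals hIIJ1 hIIJ2).symm
  have hlap : (∫ s in (0:ℝ)..1, Real.exp (-(s*t)) * s^k) * D^(k+1) ≤ CL := by
    have := hCLb t ht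
    simpa [show k+1-1 = k by ring] using this
  have hJ1b : J1 ≤ M * ∫ s in (0:ℝ)..1, Real.exp (-(s*t)) * s^k := by
    rw [← intervalIntegral.integral_const_mul]
    apply intervalIntegral.integral_mono_on (by norm_num) hIIJ1
    · apply ContinuousOn.intervalIntegrable
      exact (continuousOn_const.mul (((Real.continuous_exp.comp
        (continuous_id.mul continuous_const).neg)).mul (cont_rpow_pos hk)).continuousOn)
    · intro s hs
      have hA : 0 ≤ Real.exp (-(s*t)) * s^k :=
        mul_nonneg (Real.exp_pos _).le (Real.rpow_nonneg hs.1 _)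
      have hle : (2-s)^(k-1) ≤ M := by
        rcases le_or_gt (k-1) 0 with hneg | hpos
        · calc (2-s)^(k-1) ≤ 1^(k-1) :=
              Real.rpow_le_rpow_of_nonpos one_pos (by linarith [hs.2]) hneg
            _ = 1 := Real.one_rpow _
            _ ≤ M := le_max_left _ _
        · calc (2-s)^(k-1) ≤ 2^(k-1) :=
              Real.rpow_le_rpow (by linarith [hs.2]) (by linarith [hs.1]) hpos.le
            _ ≤ M := le_max_right _ _
      calc Real.exp (-(s*t)) * s^k * (2-s)^(k-1)
          ≤ Real.exp (-(s*t)) * s^k * M := mul_le_mul_of_nonneg_left hle hA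
        _ = M * (Real.exp (-(s*t)) * s^k) := by ring
  have hJ2b : J2 ≤ 2^k * Real.exp (-t) * (1/k) := by
    have hint : (∫ s in (1:ℝ)..2, (2^k * Real.exp (-t)) * (2-s)^(k-1))
        = 2^k * Real.exp (-t) * (1/k) := by
      rw [intervalIntegral.integral_const_mul, int_sub_rpow (by linarith) 2 1 2]
      norm_num [show k-1+1 = k by ring, Real.zero_rpow (ne_of_gt hk)]
    rw [← hint]
    apply intervalIntegral.integral_mono_on (by norm_num) hIIJ2
      ((II_sub_rpow (by linarith) 2 1 2).const_mul _)
    intro s hs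
    have h2s : 0 ≤ (2-s)^(k-1) := Real.rpow_nonneg (by linarith [hs.2]) _
    have he : Real.exp (-(s*t)) ≤ Real.exp (-t) := by
      apply Real.exp_le_exp.2
      nlinarith [hs.1]
    have hsk : s^k ≤ 2^k := Real.rpow_le_rpow (by linarith [hs.1]) hs.2 hk.le
    have : Real.exp (-(s*t)) * s^k ≤ Real.exp (-t) * 2^k :=
      mul_le_mul he hsk (Real.rpow_nonneg (by linarith [hs.1]) _) (Real.exp_pos _).le
    calc Real.exp (-(s*t)) * s^k * (2-s)^(k-1) ≤ (Real.exp (-t) * 2^k) * (2-s)^(k-1) :=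
        mul_le_mul_of_nonneg_right this h2s
      _ = (2^k * Real.exp (-t)) * (2-s)^(k-1) := by ring
  have hJ1D : J1 * D^(k+1) ≤ M * CL := by
    calc J1 * D^(k+1) ≤ (M * ∫ s in (0:ℝ)..1, Real.exp (-(s*t)) * s^k) * D^(k+1) :=
        mul_le_mul_of_nonneg_right hJ1b hDk
      _ = M * ((∫ s in (0:ℝ)..1, Real.exp (-(s*t)) * s^k) * D^(k+1)) := by ring
      _ ≤ M * CL := mul_le_mul_of_nonneg_left hlap hMpos.le
  have hJ2D : J2 * D^(k+1) ≤ 2^k / k * CE := by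
    calc J2 * D^(k+1) ≤ (2^k * Real.exp (-t) * (1/k)) * D^(k+1) :=
        mul_le_mul_of_nonneg_right hJ2b hDk
      _ = 2^k / k * (Real.exp (-t) * D^(k+1)) := by ring
      _ ≤ 2^k / k * CE := by
          apply mul_le_mul_of_nonneg_left (hCEb t ht)
          positivity
  calc Fk k (-t) * D^(k+1) = Real.exp t * (J1 * D^(k+1) + J2 * D^(k+1)) := by rw [step1, hsplitJ]; ring
    _ ≤ Real.exp t * (M * CL + 2^k / k * CE) :=
        mul_le_mul_of_nonneg_left (by linarith) (Real.exp_pos _).le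
    _ = (M * CL + 2^k / k * CE) * Real.exp t := by ring

lemma Fk_bounds (k : ℝ) (hk : 0 < k) :
    ∃ c C : ℝ, 0 < c ∧ 0 < C ∧ ∀ t : ℝ, 0 ≤ t →
      (c * Real.exp t ≤ Fk k t * (1+2*t)^k ∧ Fk k t * (1+2*t)^k ≤ C * Real.exp t ∧
       c * Real.exp t ≤ Fk k (-t) * (1+2*t)^(k+1) ∧ Fk k (-t) * (1+2*t)^(k+1) ≤ C * Real.exp t) := by
  obtain ⟨C1, hC1, h1⟩ := Fk_upper_plus hk
  obtain ⟨C2, hC2, h2⟩ := Fk_upper_minus hk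
  have hm : (0:ℝ) < min 1 (2^(k-1)) := lt_min one_pos (Real.rpow_pos_of_pos two_pos _)
  refine ⟨min (Real.exp (-1)/k) (min 1 (2^(k-1)) * Real.exp (-1)/(k+1)), max C1 C2,
    lt_min (by positivity) (by positivity), lt_max_of_lt_left hC1, fun t ht => ⟨?_, ?_, ?_, ?_⟩⟩
  · calc min (Real.exp (-1)/k) (min 1 (2^(k-1)) * Real.exp (-1)/(k+1)) * Real.exp t
        ≤ (Real.exp (-1)/k) * Real.exp t :=
          mul_le_mul_of_nonneg_right (min_le_left _ _) (Real.exp_pos _).le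
      _ ≤ Fk k t * (1+2*t)^k := Fk_lower_plus hk ht
  · exact (h1 t ht).trans (mul_le_mul_of_nonneg_right (le_max_left _ _) (Real.exp_pos _).le)
  · calc min (Real.exp (-1)/k) (min 1 (2^(k-1)) * Real.exp (-1)/(k+1)) * Real.exp t
        ≤ (min 1 (2^(k-1)) * Real.exp (-1)/(k+1)) * Real.exp t :=
          mul_le_mul_of_nonneg_right (min_le_right _ _) (Real.exp_pos _).le
      _ ≤ Fk k (-t) * (1+2*t)^(k+1) := Fk_lower_minus hk ht
  · exact (h2 t ht).trans (mul_le_mul_of_nonneg_right (le_max_right _ _) (Real.exp_pos _).le)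

noncomputable def c0 (k : ℝ) : ℝ := Real.Gamma (k + 1/2) / (Real.sqrt Real.pi * Real.Gamma k)

lemma c0_pos {k : ℝ} (hk : 0 < k) : 0 < c0 k := by
  rw [c0]
  have h1 := Real.Gamma_pos_of_pos (by linarith : (0:ℝ) < k + 1/2)
  have h2 := Real.Gamma_pos_of_pos hk
  have h3 : 0 < Real.sqrt Real.pi := Real.sqrt_pos.2 Real.pi_pos
  positivity

lemma Erk1_eq (k x v : ℝ) : Erk1 k x v = c0 k * Fk k (x*v) := by
  rw [Erk1, Fk, c0]
  congr 1
  apply intervalIntegral.integral_congr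
  intro z _
  simp only [mul_assoc]

noncomputable def gI (k l1 l2 l3 x1 x2 x3 n2 n1 : ℝ) : ℝ :=
  (n1 - n2) * ((l1 - l2) + (x1 - x2) * (n1 - l2) * (l1 - n2))
    / (1 + (x1 - x2) * (n1 - n2)) ^ (k + 1)
  * ((n1 - l3) * (n2 - l3)) * Real.exp ((x1 - x3) * n1 + (x2 - x3) * n2)
  * Wk k l1 l2 l3 n1 n2

noncomputable def fI (k l1 l2 l3 x1 x2 x3 n2 n1 : ℝ) : ℝ :=
  ((n1 - l2) * (l1 - n2) * Erk1 k ((x1 - x2) / 2) (n1 - n2)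
    + (l1 - n1) * (l2 - n2) * Erk1 k (-(x1 - x2) / 2) (n1 - n2))
  * ((n1 - l3) * (n2 - l3)) * Real.exp ((x1 + x2 - 2 * x3) * (n1 + n2) / 2)
  * Wk k l1 l2 l3 n1 n2

lemma Wk_expand {k l1 l2 l3 n1 n2 : ℝ} (h1 : n1 ≤ l1) (h2 : l2 ≤ n1) (h3 : n2 ≤ l2)
    (h4 : l3 ≤ n2) (h5 : l3 < l2) (h6 : l2 < l1) :
    Wk k l1 l2 l3 n1 n2 = (l1 - n1) ^ (k-1) * (l1 - n2) ^ (k-1) * (n1 - l2) ^ (k-1)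
      * (l2 - n2) ^ (k-1) * (n1 - l3) ^ (k-1) * (n2 - l3) ^ (k-1) := by
  have p1 : (0:ℝ) ≤ l1 - n1 := by linarith
  have p2 : (0:ℝ) ≤ l1 - n2 := by linarith
  have p3 : (0:ℝ) ≤ n1 - l2 := by linarith
  have p4 : (0:ℝ) ≤ l2 - n2 := by linarith
  have p5 : (0:ℝ) ≤ n1 - l3 := by linarith
  have p6 : (0:ℝ) ≤ n2 - l3 := by linarith
  rw [Wk]
  rw [Real.mul_rpow (mul_nonneg (mul_nonneg (mul_nonneg (mul_nonneg p1 p2) p3) p4) p5) p6]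
  rw [Real.mul_rpow (mul_nonneg (mul_nonneg (mul_nonneg p1 p2) p3) p4) p5]
  rw [Real.mul_rpow (mul_nonneg (mul_nonneg p1 p2) p3) p4]
  rw [Real.mul_rpow (mul_nonneg p1 p2) p3]
  rw [Real.mul_rpow p1 p2]

lemma Wk_nonneg {k l1 l2 l3 n1 n2 : ℝ} (h1 : n1 ≤ l1) (h2 : l2 ≤ n1) (h3 : n2 ≤ l2)
    (h4 : l3 ≤ n2) (h5 : l3 < l2) (h6 : l2 < l1) : 0 ≤ Wk k l1 l2 l3 n1 n2 := by
  have p1 : (0:ℝ) ≤ l1 - n1 := by linarith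
  have p2 : (0:ℝ) ≤ l1 - n2 := by linarith
  have p3 : (0:ℝ) ≤ n1 - l2 := by linarith
  have p4 : (0:ℝ) ≤ l2 - n2 := by linarith
  have p5 : (0:ℝ) ≤ n1 - l3 := by linarith
  have p6 : (0:ℝ) ≤ n2 - l3 := by linarith
  exact Real.rpow_nonneg (mul_nonneg (mul_nonneg (mul_nonneg (mul_nonneg (mul_nonneg p1 p2) p3) p4) p5) p6) _

lemma ptwise {k c C : ℝ} (hk : 0 < k)
    (hbd : ∀ t : ℝ, 0 ≤ t →
      (c * Real.exp t ≤ Fk k t * (1+2*t)^k ∧ Fk k t * (1+2*t)^k ≤ C * Real.exp t ∧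
       c * Real.exp t ≤ Fk k (-t) * (1+2*t)^(k+1) ∧ Fk k (-t) * (1+2*t)^(k+1) ≤ C * Real.exp t))
    (hc : 0 < c)
    {l1 l2 l3 x1 x2 x3 : ℝ} (h21 : l2 < l1) (h32 : l3 < l2) (hx : x2 ≤ x1)
    {n1 n2 : ℝ} (hn1 : n1 ∈ Set.Icc l2 l1) (hn2 : n2 ∈ Set.Icc l3 l2) :
    0 ≤ gI k l1 l2 l3 x1 x2 x3 n2 n1 ∧
    c0 k * c * gI k l1 l2 l3 x1 x2 x3 n2 n1 ≤ fI k l1 l2 l3 x1 x2 x3 n2 n1 ∧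
    fI k l1 l2 l3 x1 x2 x3 n2 n1 ≤ c0 k * C * gI k l1 l2 l3 x1 x2 x3 n2 n1 := by
  obtain ⟨hn1a, hn1b⟩ := hn1
  obtain ⟨hn2a, hn2b⟩ := hn2
  have hc0 : 0 < c0 k := c0_pos hk
  set u : ℝ := x1 - x2 with hu
  have hu0 : 0 ≤ u := by simp only [hu]; linarith
  set v : ℝ := n1 - n2 with hv
  have hv0 : 0 ≤ v := by simp only [hv]; linarith
  set t : ℝ := u/2 * v with htdef
  have ht : 0 ≤ t := by simp only [htdef]; positivity
  set D : ℝ := 1 + 2*t with hDdef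
  have hDpos : 0 < D := by simp only [hDdef]; linarith
  have hDk : (0:ℝ) < D^k := Real.rpow_pos_of_pos hDpos _
  have hDk1 : (0:ℝ) < D^(k+1) := Real.rpow_pos_of_pos hDpos _
  obtain ⟨hL1, hL2, hL3, hL4⟩ := hbd t ht
  set a : ℝ := (n1-l2)*(l1-n2) with ha
  have ha0 : 0 ≤ a := mul_nonneg (by linarith) (by linarith)
  set b : ℝ := (l1-n1)*(l2-n2) with hb
  have hb0 : 0 ≤ b := mul_nonneg (by linarith) (by linarith)
  have hWk : 0 ≤ Wk k l1 l2 l3 n1 n2 := Wk_nonneg hn1b hn1a hn2b hn2a h32 h21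
  set R0 : ℝ := (n1-l3)*(n2-l3) * Real.exp ((x1+x2-2*x3)*(n1+n2)/2) * Wk k l1 l2 l3 n1 n2 with hR0def
  have hR0 : 0 ≤ R0 := by
    apply mul_nonneg (mul_nonneg (mul_nonneg (by linarith) (by linarith)) (Real.exp_pos _).le) hWk
  have hE1 : Erk1 k ((x1-x2)/2) (n1-n2) = c0 k * Fk k t := by
    rw [Erk1_eq, show (x1-x2)/2*(n1-n2) = t by simp only [htdef, hu, hv] <;> ring]
  have hE2 : Erk1 k (-(x1-x2)/2) (n1-n2) = c0 k * Fk k (-t) := by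
    rw [Erk1_eq, show -(x1-x2)/2*(n1-n2) = -t by simp only [htdef, hu, hv] <;> ring]
  have hf_eq : fI k l1 l2 l3 x1 x2 x3 n2 n1
      = (a * (c0 k * Fk k t) + b * (c0 k * Fk k (-t))) * R0 := by
    rw [fI, hE1, hE2]
    simp only [hR0def, ha, hb]
    ring
  have hg_eq : gI k l1 l2 l3 x1 x2 x3 n2 n1
      = Real.exp t * (a / D^k + b / D^(k+1)) * R0 := by
    rw [gI]
    have hbase : 1 + (x1-x2)*(n1-n2) = D := by simp only [hDdef, htdef, hu, hv] <;> ring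
    have hnum : (n1-n2) * ((l1-l2) + (x1-x2)*(n1-l2)*(l1-n2)) = a*D + b := by
      simp only [hDdef, htdef, hu, hv, ha, hb] <;> ring
    have hDsplit : D^(k+1) = D^k * D := by
      rw [Real.rpow_add hDpos, Real.rpow_one]
    have hfrac : (a*D + b)/D^(k+1) = a/D^k + b/D^(k+1) := by
      rw [hDsplit]
      field_simp
    have hexp : Real.exp ((x1-x3)*n1 + (x2-x3)*n2)
        = Real.exp ((x1+x2-2*x3)*(n1+n2)/2) * Real.exp t := by
      rw [← Real.exp_add]
      congr 1
      simp only [htdef, hu, hv] <;> ring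
    rw [hbase, hnum, hfrac, hexp]
    simp only [hR0def]
    ring
  have hF1 : c * Real.exp t / D^k ≤ Fk k t := (div_le_iff₀ hDk).2 hL1
  have hF1' : Fk k t ≤ C * Real.exp t / D^k := (le_div_iff₀ hDk).2 hL2
  have hF2 : c * Real.exp t / D^(k+1) ≤ Fk k (-t) := (div_le_iff₀ hDk1).2 hL3
  have hF2' : Fk k (-t) ≤ C * Real.exp t / D^(k+1) := (le_div_iff₀ hDk1).2 hL4
  have hQ0 : 0 ≤ Real.exp t * (a / D^k + b / D^(k+1)) := by positivity
  refine ⟨by rw [hg_eq]; exact mul_nonneg hQ0 hR0, ?_, ?_⟩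
  · rw [hf_eq, hg_eq]
    have key : c0 k * c * (Real.exp t * (a / D^k + b / D^(k+1)))
        ≤ a * (c0 k * Fk k t) + b * (c0 k * Fk k (-t)) := by
      have e1 : c0 k * c * (Real.exp t * (a / D^k + b / D^(k+1)))
          = a * (c0 k * (c * Real.exp t / D^k)) + b * (c0 k * (c * Real.exp t / D^(k+1))) := by
        ring
      rw [e1]
      exact add_le_add
        (mul_le_mul_of_nonneg_left (mul_le_mul_of_nonneg_left hF1 hc0.le) ha0)
        (mul_le_mul_of_nonneg_left (mul_le_mul_of_nonneg_left hF2 hc0.le) hb0)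
    calc c0 k * c * (Real.exp t * (a / D^k + b / D^(k+1)) * R0)
        = (c0 k * c * (Real.exp t * (a / D^k + b / D^(k+1)))) * R0 := by ring
      _ ≤ (a * (c0 k * Fk k t) + b * (c0 k * Fk k (-t))) * R0 :=
          mul_le_mul_of_nonneg_right key hR0
  · rw [hf_eq, hg_eq]
    have key : a * (c0 k * Fk k t) + b * (c0 k * Fk k (-t))
        ≤ c0 k * C * (Real.exp t * (a / D^k + b / D^(k+1))) := by
      have e1 : c0 k * C * (Real.exp t * (a / D^k + b / D^(k+1)))
          = a * (c0 k * (C * Real.exp t / D^k)) + b * (c0 k * (C * Real.exp t / D^(k+1))) := by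
        ring
      rw [e1]
      exact add_le_add
        (mul_le_mul_of_nonneg_left (mul_le_mul_of_nonneg_left hF1' hc0.le) ha0)
        (mul_le_mul_of_nonneg_left (mul_le_mul_of_nonneg_left hF2' hc0.le) hb0)
    calc (a * (c0 k * Fk k t) + b * (c0 k * Fk k (-t))) * R0
        ≤ (c0 k * C * (Real.exp t * (a / D^k + b / D^(k+1)))) * R0 :=
          mul_le_mul_of_nonneg_right key hR0
      _ = c0 k * C * (Real.exp t * (a / D^k + b / D^(k+1)) * R0) := by ring

lemma II_congr_on {f g : ℝ → ℝ} {a b : ℝ} (hf : IntervalIntegrable f volume a b)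
    (h : ∀ x ∈ Set.uIcc a b, f x = g x) : IntervalIntegrable g volume a b := by
  rw [intervalIntegrable_iff] at hf ⊢
  exact hf.congr_fun (fun x hx => h x (Set.uIoc_subset_uIcc hx)) measurableSet_uIoc

lemma II_pair {r A B : ℝ} (hr : -1 < r) (hAB : A < B) {φ : ℝ → ℝ}
    (hφ : ContinuousOn φ (Set.Icc A B)) :
    IntervalIntegrable (fun x => (B - x)^r * ((x - A)^r * φ x)) volume A B := by
  set c : ℝ := (A+B)/2 with hc
  have hAc : A < c := by simp only [hc]; linarith
  have hcB : c < B := by simp only [hc]; linarith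
  have hIccL : Set.uIcc A c ⊆ Set.Icc A B := by
    rw [Set.uIcc_of_le hAc.le]
    exact Set.Icc_subset_Icc le_rfl (by linarith)
  have hIccR : Set.uIcc c B ⊆ Set.Icc A B := by
    rw [Set.uIcc_of_le hcB.le]
    exact Set.Icc_subset_Icc (by linarith) le_rfl
  have hxa : IntervalIntegrable (fun x : ℝ => (x - A)^r) volume A c := by
    have h := (intervalIntegrable_rpow' (a := 0) (b := c - A) hr).comp_sub_right A
    simpa using h
  have left : IntervalIntegrable (fun x => (B - x)^r * ((x - A)^r * φ x)) volume A c := by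
    have h1 : IntervalIntegrable (fun x => (x - A)^r * φ x) volume A c :=
      hxa.mul_continuousOn (hφ.mono hIccL)
    have h2 : ContinuousOn (fun x : ℝ => (B - x)^r) (Set.uIcc A c) := by
      apply ContinuousOn.rpow_const (continuous_const.sub continuous_id).continuousOn
      intro x hx
      rw [Set.uIcc_of_le hAc.le] at hx
      left
      simp only [Pi.sub_apply, id_eq]
      have := hx.2
      intro hcon
      linarith
    exact h1.continuousOn_mul h2
  have right : IntervalIntegrable (fun x => (B - x)^r * ((x - A)^r * φ x)) volume c B := by
    have h1 : IntervalIntegrable (fun x : ℝ => (B - x)^r) volume c B := II_sub_rpow hr B c B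
    have h2 : ContinuousOn (fun x : ℝ => (x - A)^r * φ x) (Set.uIcc c B) := by
      apply ContinuousOn.mul _ (hφ.mono hIccR)
      apply ContinuousOn.rpow_const (continuous_id.sub continuous_const).continuousOn
      intro x hx
      rw [Set.uIcc_of_le hcB.le] at hx
      left
      simp only [Pi.sub_apply, id_eq]
      have := hx.1
      intro hcon
      linarith
    exact h1.mul_continuousOn h2
  exact left.trans right

lemma rpow_le_max {p q x r : ℝ} (hp : 0 < p) (hpx : p ≤ x) (hxq : x ≤ q) :
    x ^ r ≤ max (p ^ r) (q ^ r) := by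
  rcases le_or_gt r 0 with h | h
  · exact le_max_of_le_left (Real.rpow_le_rpow_of_nonpos hp hpx h)
  · exact le_max_of_le_right (Real.rpow_le_rpow (by linarith) hxq h.le)

lemma abs_mul_le' {a b A B : ℝ} (ha : |a| ≤ A) (hb : |b| ≤ B) : |a*b| ≤ A*B := by
  rw [abs_mul]
  exact mul_le_mul ha hb (abs_nonneg _) ((abs_nonneg a).trans ha)

lemma gI_inner_II {k l1 l2 l3 x1 x2 x3 : ℝ} (hk : 0 < k) (h21 : l2 < l1) (h32 : l3 < l2)
    (hx : x2 ≤ x1) {n2 : ℝ} (hn2 : n2 ∈ Set.Icc l3 l2) :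
    IntervalIntegrable (fun n1 => gI k l1 l2 l3 x1 x2 x3 n2 n1) volume l2 l1 := by
  obtain ⟨hn2a, hn2b⟩ := hn2
  set φ : ℝ → ℝ := fun n1 =>
    (n1 - n2) * ((l1-l2) + (x1-x2)*(n1-l2)*(l1-n2)) / (1 + (x1-x2)*(n1-n2))^(k+1)
    * ((n1-l3)*(n2-l3)) * Real.exp ((x1-x3)*n1+(x2-x3)*n2)
    * ((l1-n2)^(k-1) * (l2-n2)^(k-1) * ((n1-l3)^(k-1) * (n2-l3)^(k-1))) with hφdef
  have hφ : ContinuousOn φ (Set.Icc l2 l1) := by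
    have hA : ContinuousOn (fun n1 : ℝ => (n1 - n2) * ((l1-l2) + (x1-x2)*(n1-l2)*(l1-n2)))
        (Set.Icc l2 l1) := by fun_prop
    have hdenbase : ContinuousOn (fun n1 : ℝ => 1 + (x1-x2)*(n1-n2)) (Set.Icc l2 l1) := by fun_prop
    have hden : ContinuousOn (fun n1 : ℝ => (1 + (x1-x2)*(n1-n2))^(k+1)) (Set.Icc l2 l1) := by
      apply ContinuousOn.rpow_const hdenbase
      intro x hx
      left
      have : 0 < 1 + (x1-x2)*(x-n2) := by nlinarith [hx.1]
      exact ne_of_gt this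
    have hdiv : ContinuousOn (fun n1 : ℝ =>
        (n1 - n2) * ((l1-l2) + (x1-x2)*(n1-l2)*(l1-n2)) / (1 + (x1-x2)*(n1-n2))^(k+1))
        (Set.Icc l2 l1) := by
      apply ContinuousOn.div hA hden
      intro x hx
      have : 0 < 1 + (x1-x2)*(x-n2) := by nlinarith [hx.1]
      exact (Real.rpow_pos_of_pos this _).ne'
    have hn1l3 : ContinuousOn (fun n1 : ℝ => (n1-l3)^(k-1)) (Set.Icc l2 l1) := by
      apply ContinuousOn.rpow_const (by fun_prop)
      intro x hx
      left
      have : 0 < x - l3 := by linarith [hx.1]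
      exact ne_of_gt this
    exact ((hdiv.mul (by fun_prop)).mul (by fun_prop)).mul
      ((continuousOn_const.mul continuousOn_const).mul (hn1l3.mul continuousOn_const))
  apply II_congr_on (II_pair (by linarith : (-1:ℝ) < k - 1) h21 hφ)
  intro n1 hn1
  rw [Set.uIcc_of_le h21.le] at hn1
  rw [gI, Wk_expand hn1.2 hn1.1 hn2b hn2a h32 h21]
  simp only [hφdef]
  ring

lemma fI_inner_II {k c C l1 l2 l3 x1 x2 x3 : ℝ} (hk : 0 < k)
    (hbd : ∀ t : ℝ, 0 ≤ t →
      (c * Real.exp t ≤ Fk k t * (1+2*t)^k ∧ Fk k t * (1+2*t)^k ≤ C * Real.exp t ∧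
       c * Real.exp t ≤ Fk k (-t) * (1+2*t)^(k+1) ∧ Fk k (-t) * (1+2*t)^(k+1) ≤ C * Real.exp t))
    (hc : 0 < c) (h21 : l2 < l1) (h32 : l3 < l2) (hx : x2 ≤ x1)
    {n2 : ℝ} (hn2 : n2 ∈ Set.Icc l3 l2) :
    IntervalIntegrable (fun n1 => fI k l1 l2 l3 x1 x2 x3 n2 n1) volume l2 l1 := by
  have hg := gI_inner_II (x1 := x1) (x2 := x2) (x3 := x3) hk h21 h32 hx hn2
  rw [intervalIntegrable_iff] at hg ⊢
  apply Integrable.mono' (hg.const_mul (c0 k * C))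
  · -- measurability
    apply Measurable.aestronglyMeasurable
    have hFm : Measurable (Fk k) := (Fk_cont hk).measurable
    have hE1m : Measurable (fun n1 : ℝ => Erk1 k ((x1-x2)/2) (n1-n2)) := by
      have : (fun n1 : ℝ => Erk1 k ((x1-x2)/2) (n1-n2))
          = fun n1 => c0 k * Fk k ((x1-x2)/2*(n1-n2)) := funext fun n1 => Erk1_eq _ _ _
      rw [this]
      exact (measurable_const.mul (hFm.comp (by fun_prop)))
    have hE2m : Measurable (fun n1 : ℝ => Erk1 k (-(x1-x2)/2) (n1-n2)) := by
      have : (fun n1 : ℝ => Erk1 k (-(x1-x2)/2) (n1-n2))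
          = fun n1 => c0 k * Fk k (-(x1-x2)/2*(n1-n2)) := funext fun n1 => Erk1_eq _ _ _
      rw [this]
      exact (measurable_const.mul (hFm.comp (by fun_prop)))
    unfold fI Wk
    fun_prop
  · rw [Filter.eventually_iff_exists_mem]
    refine ⟨Set.uIoc l2 l1, self_mem_ae_restrict measurableSet_uIoc, fun n1 hn1 => ?_⟩
    rw [Set.uIoc_of_le h21.le] at hn1
    have hn1' : n1 ∈ Set.Icc l2 l1 := ⟨hn1.1.le, hn1.2⟩
    obtain ⟨hg0, hlow, hup⟩ := ptwise hk hbd hc h21 h32 hx hn1' hn2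
    have hf0 : 0 ≤ fI k l1 l2 l3 x1 x2 x3 n2 n1 := by
      have : 0 ≤ c0 k * c * gI k l1 l2 l3 x1 x2 x3 n2 n1 := by
        apply mul_nonneg (mul_nonneg (c0_pos hk).le hc.le) hg0
      linarith
    rw [Real.norm_eq_abs, abs_of_nonneg hf0]
    exact hup

noncomputable def gmod (k l1 l2 l3 x1 x2 x3 n1 n2 : ℝ) : ℝ :=
  (n1-n2) * ((l1-l2) + (x1-x2)*(n1-l2)*(l1-n2)) / (1 + (x1-x2)*(max 0 (n1-n2)))^(k+1)
  * ((n1-l3)*(n2-l3)) * Real.exp ((x1-x3)*n1+(x2-x3)*n2)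
  * ((l1-n1)^(k-1) * ((n1-l2)^(k-1) * ((l1-n2)^(k-1) * (n1-l3)^(k-1))))

lemma gI_fact {k l1 l2 l3 x1 x2 x3 : ℝ} (hk : 0 < k) (h21 : l2 < l1) (h32 : l3 < l2)
    (hx : x2 ≤ x1) {n1 n2 : ℝ} (hn1 : n1 ∈ Set.Icc l2 l1) (hn2 : n2 ∈ Set.Icc l3 l2) :
    gI k l1 l2 l3 x1 x2 x3 n2 n1
      = (l2-n2)^(k-1) * ((n2-l3)^(k-1) * gmod k l1 l2 l3 x1 x2 x3 n1 n2) := by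
  rw [gI, gmod, Wk_expand hn1.2 hn1.1 hn2.2 hn2.1 h32 h21,
    max_eq_right (by linarith [hn1.1, hn2.2] : (0:ℝ) ≤ n1 - n2)]
  ring

lemma gmod_contAt {k l1 l2 l3 x1 x2 x3 : ℝ} (hk : 0 < k) (h21 : l2 < l1) (h32 : l3 < l2)
    (hx : x2 ≤ x1) {n1 n2₀ : ℝ} (hn2₀ : n2₀ ∈ Set.Icc l3 l2) :
    ContinuousAt (fun n2 => gmod k l1 l2 l3 x1 x2 x3 n1 n2) n2₀ := by
  have hmax0 : (0:ℝ) ≤ max 0 (n1 - n2₀) := le_max_left _ _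
  have hbasepos : (0:ℝ) < 1 + (x1-x2)*(max 0 (n1-n2₀)) := by nlinarith
  have hden : ContinuousAt (fun n2 : ℝ => (1 + (x1-x2)*(max 0 (n1-n2)))^(k+1)) n2₀ := by
    apply ContinuousAt.rpow_const
    · exact (continuous_const.add (continuous_const.mul
        (continuous_const.max (continuous_const.sub continuous_id)))).continuousAt
    · exact Or.inl (ne_of_gt hbasepos)
  have hdennz : (1 + (x1-x2)*(max 0 (n1-n2₀)))^(k+1) ≠ 0 :=
    (Real.rpow_pos_of_pos hbasepos _).ne'
  have hnum : ContinuousAt (fun n2 : ℝ => (n1-n2) * ((l1-l2) + (x1-x2)*(n1-l2)*(l1-n2))) n2₀ := by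
    fun_prop
  have hdiv := hnum.div hden hdennz
  have hr3 : ContinuousAt (fun n2 : ℝ => (l1-n2)^(k-1)) n2₀ := by
    apply ContinuousAt.rpow_const (by fun_prop)
    exact Or.inl (ne_of_gt (by linarith [hn2₀.2] : 0 < l1 - n2₀))
  exact ((hdiv.mul (by fun_prop)).mul (by fun_prop)).mul
    (continuousAt_const.mul (continuousAt_const.mul (hr3.mul continuousAt_const)))

lemma phi2_contOn {k l1 l2 l3 x1 x2 x3 : ℝ} (hk : 0 < k) (h21 : l2 < l1) (h32 : l3 < l2)
    (hx : x2 ≤ x1) :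
    ContinuousOn (fun n2 => ∫ n1 in l2..l1, gmod k l1 l2 l3 x1 x2 x3 n1 n2) (Set.Icc l3 l2) := by
  intro n2₀ hn2₀
  apply ContinuousAt.continuousWithinAt
  set δ : ℝ := min 1 ((l1-l2)/2) with hδ
  have hδpos : 0 < δ := lt_min one_pos (by linarith)
  have hδ1 : δ ≤ 1 := min_le_left _ _
  have hδ2 : δ ≤ (l1-l2)/2 := min_le_right _ _
  set B1 : ℝ := l1 - l3 + 1 with hB1
  have hB1ge1 : (1:ℝ) ≤ B1 := by simp only [hB1]; linarith
  have hB1pos : (0:ℝ) < B1 := by linarith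
  set B2 : ℝ := (l1-l2) + (x1-x2)*(B1*B1) with hB2
  have hB2pos : (0:ℝ) < B2 := by
    have h0 : 0 ≤ (x1-x2)*(B1*B1) := mul_nonneg (by linarith) (by positivity)
    simp only [hB2]; linarith
  set B3 : ℝ := |x1-x3| *(|l1|+|l2|) + |x2-x3| *(|l2|+|l3|+1) with hB3
  set B4 : ℝ := max (((l1-l2)/2)^(k-1)) (B1^(k-1)) with hB4
  have hB4nn : 0 ≤ B4 := le_trans (Real.rpow_nonneg (by linarith) _) (le_max_left _ _)
  set B5 : ℝ := max ((l2-l3)^(k-1)) (B1^(k-1)) with hB5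
  have hB5nn : 0 ≤ B5 := le_trans (Real.rpow_nonneg (by linarith) _) (le_max_left _ _)
  apply intervalIntegral.continuousAt_of_dominated_interval
    (bound := fun n1 => B1*B2 * (B1*B1) * Real.exp B3
      * ((l1-n1)^(k-1) * ((n1-l2)^(k-1) * (B4*B5))))
  · filter_upwards with n2
    apply Measurable.aestronglyMeasurable
    unfold gmod
    fun_prop
  · have hball : Metric.ball n2₀ δ ∈ nhds n2₀ := Metric.ball_mem_nhds _ hδpos
    filter_upwards [hball] with n2 hn2
    apply Filter.Eventually.of_forall
    intro n1 hn1
    rw [Set.uIoc_of_le h21.le] at hn1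
    have hn2d : |n2 - n2₀| < δ := by rwa [Metric.mem_ball, Real.dist_eq] at hn2
    have habs := abs_lt.1 hn2d
    have hn2lo : l3 - 1 < n2 := by linarith [habs.1, hn2₀.1]
    have hn2hi : n2 < l2 + δ := by linarith [habs.2, hn2₀.2]
    have hn1lo : l2 < n1 := hn1.1
    have hn1hi : n1 ≤ l1 := hn1.2
    have hl1n2 : (l1-l2)/2 ≤ l1 - n2 := by linarith
    have hl1n2' : l1 - n2 ≤ B1 := by simp only [hB1]; linarith
    -- piece 1 : quotient
    have h1 : |(n1-n2) * ((l1-l2) + (x1-x2)*(n1-l2)*(l1-n2))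
        / (1 + (x1-x2)*(max 0 (n1-n2)))^(k+1)| ≤ B1*B2 := by
      rw [abs_div]
      have hmax0 : (0:ℝ) ≤ max 0 (n1 - n2) := le_max_left _ _
      have hd1 : (1:ℝ) ≤ (1 + (x1-x2)*(max 0 (n1-n2)))^(k+1) :=
        Real.one_le_rpow (by nlinarith) (by linarith)
      have habsd : (1:ℝ) ≤ |(1 + (x1-x2)*(max 0 (n1-n2)))^(k+1)| :=
        le_trans hd1 (le_abs_self _)
      have hb1 : |n1-n2| ≤ B1 := abs_le.2 ⟨by simp only [hB1]; linarith, by simp only [hB1]; linarith⟩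
      have hinner : 0 ≤ (x1-x2)*(n1-l2)*(l1-n2) :=
        mul_nonneg (mul_nonneg (by linarith) (by linarith)) (by linarith)
      have hq : (n1-l2)*(l1-n2) ≤ B1*B1 :=
        mul_le_mul (by simp only [hB1]; linarith) hl1n2' (by linarith) hB1pos.le
      have hb2 : |(l1-l2) + (x1-x2)*(n1-l2)*(l1-n2)| ≤ B2 := by
        rw [abs_of_nonneg (by linarith)]
        have : (x1-x2)*(n1-l2)*(l1-n2) ≤ (x1-x2)*(B1*B1) := by
          calc (x1-x2)*(n1-l2)*(l1-n2) = (x1-x2)*((n1-l2)*(l1-n2)) := by ring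
            _ ≤ (x1-x2)*(B1*B1) := mul_le_mul_of_nonneg_left hq (by linarith)
        simp only [hB2]; linarith
      calc |(n1-n2) * ((l1-l2) + (x1-x2)*(n1-l2)*(l1-n2))|
            / |(1 + (x1-x2)*(max 0 (n1-n2)))^(k+1)|
          ≤ |(n1-n2) * ((l1-l2) + (x1-x2)*(n1-l2)*(l1-n2))| :=
            div_le_self (abs_nonneg _) habsd
        _ ≤ B1*B2 := abs_mul_le' hb1 hb2
    -- piece 2
    have h2 : |(n1-l3)*(n2-l3)| ≤ B1*B1 := by
      apply abs_mul_le'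
      · exact abs_le.2 ⟨by simp only [hB1]; linarith, by simp only [hB1]; linarith⟩
      · exact abs_le.2 ⟨by simp only [hB1]; linarith, by simp only [hB1]; linarith⟩
    -- piece 3 : exponential
    have h3 : |Real.exp ((x1-x3)*n1+(x2-x3)*n2)| ≤ Real.exp B3 := by
      rw [abs_of_nonneg (Real.exp_pos _).le, Real.exp_le_exp]
      have hn1abs : |n1| ≤ |l1|+|l2| :=
        abs_le.2 ⟨by linarith [neg_abs_le l2, abs_nonneg l1], by linarith [le_abs_self l1, abs_nonneg l2]⟩
      have hn2abs : |n2| ≤ |l2|+|l3|+1 :=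
        abs_le.2 ⟨by linarith [neg_abs_le l3, abs_nonneg l2], by linarith [le_abs_self l2, abs_nonneg l3]⟩
      have ht1 : (x1-x3)*n1 ≤ |x1-x3| *(|l1|+|l2|) := by
        calc (x1-x3)*n1 ≤ |(x1-x3)*n1| := le_abs_self _
          _ = |x1-x3| *|n1| := abs_mul _ _
          _ ≤ |x1-x3| *(|l1|+|l2|) := mul_le_mul_of_nonneg_left hn1abs (abs_nonneg _)
      have ht2 : (x2-x3)*n2 ≤ |x2-x3| *(|l2|+|l3|+1) := by
        calc (x2-x3)*n2 ≤ |(x2-x3)*n2| := le_abs_self _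
          _ = |x2-x3| *|n2| := abs_mul _ _
          _ ≤ |x2-x3| *(|l2|+|l3|+1) := mul_le_mul_of_nonneg_left hn2abs (abs_nonneg _)
      simp only [hB3]; linarith
    -- piece 4 : rpow products
    have hr1 : (0:ℝ) ≤ (l1-n1)^(k-1) := Real.rpow_nonneg (by linarith) _
    have hr2 : (0:ℝ) ≤ (n1-l2)^(k-1) := Real.rpow_nonneg (by linarith) _
    have hr3B : (l1-n2)^(k-1) ≤ B4 := by
      simp only [hB4]
      exact rpow_le_max (by linarith) hl1n2 hl1n2'
    have hr4B : (n1-l3)^(k-1) ≤ B5 := by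
      simp only [hB5]
      exact rpow_le_max (by linarith) (by linarith) (by simp only [hB1]; linarith)
    have h4 : |(l1-n1)^(k-1) * ((n1-l2)^(k-1) * ((l1-n2)^(k-1) * (n1-l3)^(k-1)))|
        ≤ (l1-n1)^(k-1) * ((n1-l2)^(k-1) * (B4*B5)) := by
      have hr3nn : (0:ℝ) ≤ (l1-n2)^(k-1) := Real.rpow_nonneg (by linarith) _
      have hr4nn : (0:ℝ) ≤ (n1-l3)^(k-1) := Real.rpow_nonneg (by linarith) _
      rw [abs_of_nonneg (mul_nonneg hr1 (mul_nonneg hr2 (mul_nonneg hr3nn hr4nn)))]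
      apply mul_le_mul_of_nonneg_left _ hr1
      apply mul_le_mul_of_nonneg_left _ hr2
      exact mul_le_mul hr3B hr4B hr4nn hB4nn
    rw [Real.norm_eq_abs]
    unfold gmod
    exact abs_mul_le' (abs_mul_le' (abs_mul_le' h1 h2) h3) h4
  · exact (II_pair (by linarith : (-1:ℝ) < k-1) h21
      (continuousOn_const : ContinuousOn (fun _ => B4*B5) _)).const_mul _
  · exact Filter.Eventually.of_forall (fun n1 _ => gmod_contAt hk h21 h32 hx hn2₀)

lemma gI_outer_II {k l1 l2 l3 x1 x2 x3 : ℝ} (hk : 0 < k) (h21 : l2 < l1) (h32 : l3 < l2)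
    (hx : x2 ≤ x1) :
    IntervalIntegrable (fun n2 => ∫ n1 in l2..l1, gI k l1 l2 l3 x1 x2 x3 n2 n1) volume l3 l2 := by
  apply II_congr_on (II_pair (by linarith : (-1:ℝ) < k-1) h32 (phi2_contOn hk h21 h32 hx))
  intro n2 hn2
  rw [Set.uIcc_of_le h32.le] at hn2
  rw [← intervalIntegral.integral_const_mul, ← intervalIntegral.integral_const_mul]
  apply intervalIntegral.integral_congr
  intro n1 hn1
  rw [Set.uIcc_of_le h21.le] at hn1
  exact (gI_fact hk h21 h32 hx hn1 hn2).symm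

lemma fI_outer_II {k c C l1 l2 l3 x1 x2 x3 : ℝ} (hk : 0 < k)
    (hbd : ∀ t : ℝ, 0 ≤ t →
      (c * Real.exp t ≤ Fk k t * (1+2*t)^k ∧ Fk k t * (1+2*t)^k ≤ C * Real.exp t ∧
       c * Real.exp t ≤ Fk k (-t) * (1+2*t)^(k+1) ∧ Fk k (-t) * (1+2*t)^(k+1) ≤ C * Real.exp t))
    (hc : 0 < c) (h21 : l2 < l1) (h32 : l3 < l2) (hx : x2 ≤ x1) :
    IntervalIntegrable (fun n2 => ∫ n1 in l2..l1, fI k l1 l2 l3 x1 x2 x3 n2 n1) volume l3 l2 := by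
  have hg := gI_outer_II (x1 := x1) (x2 := x2) (x3 := x3) hk h21 h32 hx
  rw [intervalIntegrable_iff] at hg ⊢
  apply Integrable.mono' (hg.const_mul (c0 k * C))
  · have hFm : Continuous (Fk k) := Fk_cont hk
    have hE1m : Measurable (fun p : ℝ × ℝ => Erk1 k ((x1-x2)/2) (p.2-p.1)) := by
      have he : (fun p : ℝ × ℝ => Erk1 k ((x1-x2)/2) (p.2-p.1))
          = fun p => c0 k * Fk k ((x1-x2)/2*(p.2-p.1)) := funext fun p => Erk1_eq _ _ _
      rw [he]
      exact (continuous_const.mul (hFm.comp (by fun_prop))).measurable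
    have hE2m : Measurable (fun p : ℝ × ℝ => Erk1 k (-(x1-x2)/2) (p.2-p.1)) := by
      have he : (fun p : ℝ × ℝ => Erk1 k (-(x1-x2)/2) (p.2-p.1))
          = fun p => c0 k * Fk k (-(x1-x2)/2*(p.2-p.1)) := funext fun p => Erk1_eq _ _ _
      rw [he]
      exact (continuous_const.mul (hFm.comp (by fun_prop))).measurable
    have hjm : Measurable (fun p : ℝ × ℝ => fI k l1 l2 l3 x1 x2 x3 p.1 p.2) := by
      unfold fI Wk
      fun_prop
    have hsm := (hjm.stronglyMeasurable).integral_prod_right'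
      (ν := volume.restrict (Set.Ioc l2 l1))
    have heq : (fun n2 => ∫ n1 in l2..l1, fI k l1 l2 l3 x1 x2 x3 n2 n1)
        = fun n2 => ∫ n1 in Set.Ioc l2 l1, fI k l1 l2 l3 x1 x2 x3 n2 n1 :=
      funext fun n2 => intervalIntegral.integral_of_le h21.le
    rw [heq]
    exact hsm.aestronglyMeasurable
  · filter_upwards [self_mem_ae_restrict measurableSet_uIoc] with n2 hn2
    rw [Set.uIoc_of_le h32.le] at hn2
    have hn2' : n2 ∈ Set.Icc l3 l2 := ⟨hn2.1.le, hn2.2⟩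
    have hgII := gI_inner_II (x1 := x1) (x2 := x2) (x3 := x3) hk h21 h32 hx hn2'
    have hfII := fI_inner_II (x3 := x3) hk hbd hc h21 h32 hx hn2'
    have h0f : 0 ≤ ∫ n1 in l2..l1, fI k l1 l2 l3 x1 x2 x3 n2 n1 := by
      apply intervalIntegral.integral_nonneg h21.le
      intro n1 hn1
      obtain ⟨hg0, hlow, _⟩ := ptwise hk hbd hc h21 h32 hx hn1 hn2'
      have : 0 ≤ c0 k * c * gI k l1 l2 l3 x1 x2 x3 n2 n1 :=
        mul_nonneg (mul_nonneg (c0_pos hk).le hc.le) hg0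
      linarith
    have hle : (∫ n1 in l2..l1, fI k l1 l2 l3 x1 x2 x3 n2 n1)
        ≤ ∫ n1 in l2..l1, c0 k * C * gI k l1 l2 l3 x1 x2 x3 n2 n1 := by
      apply intervalIntegral.integral_mono_on h21.le hfII (hgII.const_mul _)
      intro n1 hn1
      exact (ptwise hk hbd hc h21 h32 hx hn1 hn2').2.2
    rw [intervalIntegral.integral_const_mul] at hle
    rw [Real.norm_eq_abs, abs_of_nonneg h0f]
    exact hle

/-- Lemma 5.x: two-sided estimate for `V(λ)^{2k} E_k(X,λ)`. -/
theorem lemma_alpha_plus (k : ℝ) (hk : 0 < k) :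
    ∃ C : ℝ, 0 < C ∧ ∀ l1 l2 l3 x1 x2 x3 : ℝ,
      l1 + l2 + l3 = 0 →
      l2 < l1 →
      l3 < l2 →
      x1 + x2 + x3 = 0 →
      x2 ≤ x1 →
      (C⁻¹ * (∫ n2 in l3..l2, ∫ n1 in l2..l1,
          (n1 - n2) * ((l1 - l2) + (x1 - x2) * (n1 - l2) * (l1 - n2))
            / (1 + (x1 - x2) * (n1 - n2)) ^ (k + 1)
          * ((n1 - l3) * (n2 - l3)) * Real.exp ((x1 - x3) * n1 + (x2 - x3) * n2)
          * Wk k l1 l2 l3 n1 n2)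
        ≤ Vlam l1 l2 l3 ^ (2 * k) * EkA2 k x1 x2 x3 l1 l2 l3 ∧
      Vlam l1 l2 l3 ^ (2 * k) * EkA2 k x1 x2 x3 l1 l2 l3
        ≤ C * (∫ n2 in l3..l2, ∫ n1 in l2..l1,
          (n1 - n2) * ((l1 - l2) + (x1 - x2) * (n1 - l2) * (l1 - n2))
            / (1 + (x1 - x2) * (n1 - n2)) ^ (k + 1)
          * ((n1 - l3) * (n2 - l3)) * Real.exp ((x1 - x3) * n1 + (x2 - x3) * n2)
          * Wk k l1 l2 l3 n1 n2)) := by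

  obtain ⟨c, C, hc, hC, hbd⟩ := Fk_bounds k hk
  have hc0 : 0 < c0 k := c0_pos hk
  have hG3 : 0 < Real.Gamma (3*k) := Real.Gamma_pos_of_pos (by linarith)
  have hGk : 0 < Real.Gamma k := Real.Gamma_pos_of_pos hk
  set K0 : ℝ := 3 * Real.Gamma (3*k) / Real.Gamma k ^ 2 with hK0def
  have hK0 : 0 < K0 := by positivity
  refine ⟨max (K0 * (c0 k * C)) (K0 * (c0 k * c))⁻¹, lt_max_of_lt_left (by positivity), ?_⟩
  intro l1 l2 l3 x1 x2 x3 _ h21 h32 _ hx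
  set IG : ℝ := ∫ n2 in l3..l2, ∫ n1 in l2..l1, gI k l1 l2 l3 x1 x2 x3 n2 n1 with hIGdef
  set IF : ℝ := ∫ n2 in l3..l2, ∫ n1 in l2..l1, fI k l1 l2 l3 x1 x2 x3 n2 n1 with hIFdef
  have hV : 0 < Vlam l1 l2 l3 := by
    rw [Vlam]
    exact mul_pos (mul_pos (by linarith) (by linarith)) (by linarith)
  have hVk : (0:ℝ) < Vlam l1 l2 l3 ^ (2*k) := Real.rpow_pos_of_pos hV _
  have hEk : EkA2 k x1 x2 x3 l1 l2 l3
      = (3 * Real.Gamma (3*k) / (Vlam l1 l2 l3 ^ (2*k) * Real.Gamma k ^ 2)) * IF := rfl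
  have key : Vlam l1 l2 l3 ^ (2*k) * EkA2 k x1 x2 x3 l1 l2 l3 = K0 * IF := by
    rw [hEk, hK0def]
    field_simp
  have hfO := fI_outer_II (x3 := x3) hk hbd hc h21 h32 hx
  have hgO := gI_outer_II (x1 := x1) (x2 := x2) (x3 := x3) hk h21 h32 hx
  have hinner_up : ∀ n2 ∈ Set.Icc l3 l2,
      (∫ n1 in l2..l1, fI k l1 l2 l3 x1 x2 x3 n2 n1)
        ≤ c0 k * C * ∫ n1 in l2..l1, gI k l1 l2 l3 x1 x2 x3 n2 n1 := by
    intro n2 hn2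
    have hgII := gI_inner_II (x1 := x1) (x2 := x2) (x3 := x3) hk h21 h32 hx hn2
    have hfII := fI_inner_II (x3 := x3) hk hbd hc h21 h32 hx hn2
    have h := intervalIntegral.integral_mono_on h21.le hfII (hgII.const_mul (c0 k * C))
      (fun n1 hn1 => (ptwise hk hbd hc h21 h32 hx hn1 hn2).2.2)
    rwa [intervalIntegral.integral_const_mul] at h
  have hinner_lo : ∀ n2 ∈ Set.Icc l3 l2,
      c0 k * c * (∫ n1 in l2..l1, gI k l1 l2 l3 x1 x2 x3 n2 n1)
        ≤ ∫ n1 in l2..l1, fI k l1 l2 l3 x1 x2 x3 n2 n1 := by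
    intro n2 hn2
    have hgII := gI_inner_II (x1 := x1) (x2 := x2) (x3 := x3) hk h21 h32 hx hn2
    have hfII := fI_inner_II (x3 := x3) hk hbd hc h21 h32 hx hn2
    have h := intervalIntegral.integral_mono_on h21.le (hgII.const_mul (c0 k * c)) hfII
      (fun n1 hn1 => (ptwise hk hbd hc h21 h32 hx hn1 hn2).2.1)
    rwa [intervalIntegral.integral_const_mul] at h
  have hIg0 : ∀ n2 ∈ Set.Icc l3 l2,
      0 ≤ ∫ n1 in l2..l1, gI k l1 l2 l3 x1 x2 x3 n2 n1 := by
    intro n2 hn2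
    exact intervalIntegral.integral_nonneg h21.le
      (fun n1 hn1 => (ptwise hk hbd hc h21 h32 hx hn1 hn2).1)
  have hIG0 : 0 ≤ IG := by
    rw [hIGdef]
    exact intervalIntegral.integral_nonneg h32.le hIg0
  have hup : IF ≤ c0 k * C * IG := by
    rw [hIFdef, hIGdef]
    have h := intervalIntegral.integral_mono_on h32.le hfO
      (hgO.const_mul (c0 k * C)) hinner_up
    rwa [intervalIntegral.integral_const_mul] at h
  have hlo : c0 k * c * IG ≤ IF := by
    rw [hIFdef, hIGdef]
    have h := intervalIntegral.integral_mono_on h32.le (hgO.const_mul (c0 k * c)) hfO hinner_lo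
    rwa [intervalIntegral.integral_const_mul] at h
  rw [key]
  constructor
  · have h1 : (max (K0 * (c0 k * C)) (K0 * (c0 k * c))⁻¹)⁻¹ ≤ K0 * (c0 k * c) := by
      have h2 : (K0 * (c0 k * c))⁻¹ ≤ max (K0 * (c0 k * C)) (K0 * (c0 k * c))⁻¹ :=
        le_max_right _ _
      calc (max (K0 * (c0 k * C)) (K0 * (c0 k * c))⁻¹)⁻¹
          ≤ ((K0 * (c0 k * c))⁻¹)⁻¹ := by
            apply inv_anti₀ (by positivity) h2
        _ = K0 * (c0 k * c) := inv_inv _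
    calc (max (K0 * (c0 k * C)) (K0 * (c0 k * c))⁻¹)⁻¹ * IG
        ≤ (K0 * (c0 k * c)) * IG := mul_le_mul_of_nonneg_right h1 hIG0
      _ = K0 * (c0 k * c * IG) := by ring
      _ ≤ K0 * IF := mul_le_mul_of_nonneg_left hlo hK0.le
  · calc K0 * IF ≤ K0 * (c0 k * C * IG) := mul_le_mul_of_nonneg_left hup hK0.le
      _ = (K0 * (c0 k * C)) * IG := by ring
      _ ≤ max (K0 * (c0 k * C)) (K0 * (c0 k * c))⁻¹ * IG :=
          mul_le_mul_of_nonneg_right (le_max_left _ _) hIG0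
end

section
/- (Lemma 5.1, formula (alpha−).) Uniformly over all λ ∈ C⁺ and all X ∈ a with x2 ≥ x1, one has V(λ)^{2k}·E_k(X,λ) ≍ ∫_{λ3}^{λ2} ∫_{λ2}^{λ1} [(ν1−ν2)(α_λ − α_X(λ1−ν1)(λ2−ν2)) / (1−α_X(ν1−ν2))^{k+1}] (ν1−λ3)(ν2−λ3) e^{(x2−x3)ν1 + (x1−x3)ν2} W_k(λ,ν) dν1 dν2. -/
open Real MeasureTheory

open intervalIntegral Set

lemma measRpowConst (c : ℝ) : Measurable fun x : ℝ => x ^ c := by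
  have h : (fun x : ℝ => x ^ c) = fun x =>
      if x = 0 then (0:ℝ) ^ c else
        if x < 0 then Real.exp (Real.log x * c) * Real.cos (c * Real.pi)
        else Real.exp (Real.log x * c) := by
    ext x
    rcases lt_trichotomy x 0 with h|h|h
    · simp only [h.ne, if_false, h, if_true]
      rw [Real.rpow_def_of_neg h, mul_comm c]
    · simp [h]
    · simp only [h.ne', if_false, not_lt.mpr h.le, if_false]
      rw [Real.rpow_def_of_pos h]
  rw [h]
  refine Measurable.ite (measurableSet_singleton 0) measurable_const ?_
  refine Measurable.ite ?_ ?_ ?_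
  · exact measurableSet_Iio (a := (0:ℝ))
  · exact ((Real.measurable_log.mul_const c).exp).mul_const _
  · exact (Real.measurable_log.mul_const c).exp

/-- master measurability of the kernel integrand -/
lemma measKer (p q t : ℝ) :
    Measurable fun z : ℝ => Real.exp (z * t) * (1 - z) ^ p * (1 + z) ^ q :=
  (((measurable_id.mul_const t).exp).mul
    ((measRpowConst p).comp (measurable_const.sub measurable_id))).mul
    ((measRpowConst q).comp (measurable_const.add measurable_id))

lemma masterInt (p q t : ℝ) (hp : -1 < p) (hq : -1 < q) :
    IntervalIntegrable (fun z => Real.exp (z * t) * (1 - z) ^ p * (1 + z) ^ q)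
      volume (-1) 1 := by
  have h1 : IntervalIntegrable (fun z : ℝ => (1 - z) ^ p) volume (-1) 1 := by
    have := (intervalIntegrable_rpow' hp (a := 0) (b := 2)).comp_sub_left 1
    norm_num at this
    exact this.symm
  have h2 : IntervalIntegrable (fun z : ℝ => (1 + z) ^ q) volume (-1) 1 := by
    have := (intervalIntegrable_rpow' hq (a := 0) (b := 2)).comp_add_left 1
    norm_num at this
    exact this
  set M1 : ℝ := Real.exp |t| * max 1 (2 ^ q) with hM1
  set M2 : ℝ := Real.exp |t| * max 1 (2 ^ p) with hM2
  refine IntervalIntegrable.mono_fun'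
    (g := fun z => M1 * (1 - z) ^ p + M2 * (1 + z) ^ q)
    ((h1.const_mul M1).add (h2.const_mul M2)) ((measKer p q t).aestronglyMeasurable) ?_
  rw [Set.uIoc_of_le (by norm_num : (-1:ℝ) ≤ 1)]
  filter_upwards [ae_restrict_mem measurableSet_Ioc] with z hz
  obtain ⟨hz1, hz2⟩ := hz
  have h1z : (0:ℝ) ≤ 1 - z := by linarith
  have h2z : (0:ℝ) ≤ 1 + z := by linarith
  have hnn : 0 ≤ Real.exp (z * t) * (1 - z) ^ p * (1 + z) ^ q :=
    mul_nonneg (mul_nonneg (Real.exp_pos _).le (Real.rpow_nonneg h1z _)) (Real.rpow_nonneg h2z _)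
  rw [Real.norm_eq_abs, abs_of_nonneg hnn]
  have het : Real.exp (z * t) ≤ Real.exp |t| := by
    apply Real.exp_le_exp.2
    calc z * t ≤ |z * t| := le_abs_self _
    _ = |z| * |t| := abs_mul _ _
    _ ≤ 1 * |t| := by
        apply mul_le_mul_of_nonneg_right _ (abs_nonneg t)
        rw [abs_le]; constructor <;> linarith
    _ = |t| := one_mul _
  rcases le_total z 0 with hz0 | hz0
  · have hb : (1:ℝ) ≤ 1 - z := by linarith
    have hb2 : (1:ℝ) - z ≤ 2 := by linarith
    have hple : (1 - z) ^ p ≤ max 1 (2 ^ p) := by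
      rcases le_total 0 p with hp0 | hp0
      · exact le_trans (Real.rpow_le_rpow h1z hb2 hp0) (le_max_right _ _)
      · exact le_trans (Real.rpow_le_one_of_one_le_of_nonpos hb hp0) (le_max_left _ _)
    have : Real.exp (z * t) * (1 - z) ^ p * (1 + z) ^ q ≤ M2 * (1 + z) ^ q := by
      rw [hM2]
      have := mul_le_mul het hple (Real.rpow_nonneg h1z _) (Real.exp_pos _).le
      exact mul_le_mul_of_nonneg_right this (Real.rpow_nonneg h2z _)
    have hpos1 : 0 ≤ M1 * (1 - z) ^ p :=
      mul_nonneg (mul_nonneg (Real.exp_pos _).le (le_trans zero_le_one (le_max_left _ _)))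
        (Real.rpow_nonneg h1z _)
    linarith
  · have hb : (1:ℝ) ≤ 1 + z := by linarith
    have hb2 : (1:ℝ) + z ≤ 2 := by linarith
    have hqle : (1 + z) ^ q ≤ max 1 (2 ^ q) := by
      rcases le_total 0 q with hq0 | hq0
      · exact le_trans (Real.rpow_le_rpow h2z hb2 hq0) (le_max_right _ _)
      · exact le_trans (Real.rpow_le_one_of_one_le_of_nonpos hb hq0) (le_max_left _ _)
    have : Real.exp (z * t) * (1 - z) ^ p * (1 + z) ^ q ≤ M1 * (1 - z) ^ p := by
      rw [hM1]
      calc Real.exp (z * t) * (1 - z) ^ p * (1 + z) ^ q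
          ≤ Real.exp |t| * (1 - z) ^ p * max 1 (2 ^ q) := by
            apply mul_le_mul (mul_le_mul_of_nonneg_right het (Real.rpow_nonneg h1z _)) hqle
              (Real.rpow_nonneg h2z _)
              (mul_nonneg (Real.exp_pos _).le (Real.rpow_nonneg h1z _))
      _ = Real.exp |t| * max 1 (2 ^ q) * (1 - z) ^ p := by ring
    have hpos2 : 0 ≤ M2 * (1 + z) ^ q :=
      mul_nonneg (mul_nonneg (Real.exp_pos _).le (le_trans zero_le_one (le_max_left _ _)))
        (Real.rpow_nonneg h2z _)
    linarith

/-- exp dominates powers: `(1+t)^p ≤ M e^t`. -/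
lemma expDom (p : ℝ) (hp : 0 ≤ p) :
    ∃ M : ℝ, 0 < M ∧ ∀ t : ℝ, 0 ≤ t → (1 + t) ^ p ≤ M * Real.exp t := by
  obtain ⟨m, hm⟩ : ∃ m : ℕ, p ≤ m := ⟨⌈p⌉₊, Nat.le_ceil p⟩
  refine ⟨2 ^ m * (m.factorial : ℝ), by positivity, fun t ht => ?_⟩
  have h1t : (1:ℝ) ≤ 1 + t := by linarith
  have step1 : (1 + t) ^ p ≤ (1 + t) ^ (m : ℝ) :=
    Real.rpow_le_rpow_of_exponent_le h1t hm
  rw [Real.rpow_natCast] at step1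
  refine le_trans step1 ?_
  have hfac : (1:ℝ) ≤ (m.factorial : ℝ) := by exact_mod_cast m.factorial_pos
  rcases le_total t 1 with ht1 | ht1
  · have : (1 + t) ^ m ≤ 2 ^ m := pow_le_pow_left₀ (by linarith) (by linarith) m
    have h2 : (1:ℝ) ≤ Real.exp t := Real.one_le_exp ht
    have h3 : (1:ℝ) ≤ (m.factorial : ℝ) * Real.exp t := by nlinarith
    nlinarith [mul_le_mul_of_nonneg_left h3 (pow_pos (show (0:ℝ) < 2 by norm_num) m).le]
  · have h2t : (1 + t) ^ m ≤ (2 * t) ^ m := pow_le_pow_left₀ (by linarith) (by linarith) m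
    rw [mul_pow] at h2t
    have h3 : t ^ m ≤ (m.factorial : ℝ) * Real.exp t := by
      have := Real.pow_div_factorial_le_exp (x := t) (by linarith) m
      rw [div_le_iff₀ (by exact_mod_cast m.factorial_pos)] at this
      linarith [this]
    calc (1 + t) ^ m ≤ 2 ^ m * t ^ m := h2t
    _ ≤ 2 ^ m * ((m.factorial : ℝ) * Real.exp t) := by
        apply mul_le_mul_of_nonneg_left h3 (by positivity)
    _ = 2 ^ m * (m.factorial : ℝ) * Real.exp t := by ring

/-- integrability of `u ↦ exp(-(u*t)) * u^(p-1)` on `[0,b]`. -/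
lemma Jintble (p t b : ℝ) (hp : 0 < p) (ht : 0 ≤ t) (hb : 0 ≤ b) :
    IntervalIntegrable (fun u => Real.exp (-(u * t)) * u ^ (p - 1)) volume 0 b := by
  refine IntervalIntegrable.mono_fun' (g := fun u => u ^ (p - 1))
    (intervalIntegrable_rpow' (by linarith)) ?_ ?_
  · exact (((measurable_id.mul_const t).neg.exp).mul (measRpowConst (p - 1))).aestronglyMeasurable
  · rw [Set.uIoc_of_le hb]
    filter_upwards [ae_restrict_mem measurableSet_Ioc] with u hu
    have hu0 : 0 < u := hu.1
    have h1 : Real.exp (-(u * t)) ≤ 1 := by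
      rw [Real.exp_le_one_iff]
      simp only [neg_nonpos]
      positivity
    have h2 : (0:ℝ) ≤ u ^ (p - 1) := Real.rpow_nonneg hu0.le _
    rw [Real.norm_eq_abs, abs_of_nonneg (mul_nonneg (Real.exp_pos _).le h2)]
    nlinarith [Real.exp_pos (-(u * t))]

/-- `∫_0^b e^{-ut} u^{p-1} du ≤ c (1+t)^{-p}`. -/
lemma Jbound (p b : ℝ) (hp : 0 < p) (hb : 0 < b) :
    ∃ c : ℝ, 0 < c ∧ ∀ t : ℝ, 0 ≤ t →
      (∫ u in (0:ℝ)..b, Real.exp (-(u * t)) * u ^ (p - 1))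
        ≤ c * (1 + t) ^ (-p) := by
  refine ⟨2 ^ p * (b ^ p / p + Real.Gamma p), by positivity, fun t ht => ?_⟩
  have hgamma : 0 < Real.Gamma p := Real.Gamma_pos_of_pos hp
  have hbp : (0:ℝ) < b ^ p := Real.rpow_pos_of_pos hb _
  have h1t : (0:ℝ) < 1 + t := by linarith
  rcases le_total t 1 with ht1 | ht1
  · -- small t : bound integrand by u^(p-1)
    have hint : (∫ u in (0:ℝ)..b, Real.exp (-(u * t)) * u ^ (p - 1))
        ≤ ∫ u in (0:ℝ)..b, u ^ (p - 1) := by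
      apply intervalIntegral.integral_mono_on hb.le (Jintble p t b hp ht hb.le)
        (intervalIntegrable_rpow' (by linarith))
      intro u hu
      have h2 : (0:ℝ) ≤ u ^ (p - 1) := Real.rpow_nonneg hu.1 _
      have h1 : Real.exp (-(u * t)) ≤ 1 := by
        rw [Real.exp_le_one_iff]; simp only [neg_nonpos]
        exact mul_nonneg hu.1 ht
      nlinarith
    have hval : (∫ u in (0:ℝ)..b, u ^ (p - 1)) = b ^ p / p := by
      rw [integral_rpow (Or.inl (by linarith))]
      rw [Real.zero_rpow (by linarith : p - 1 + 1 ≠ 0)]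
      norm_num [sub_add_cancel]
    have hpow : (1 + t) ^ p ≤ 2 ^ p :=
      Real.rpow_le_rpow (by linarith) (by linarith) hp.le
    have hip : (1 + t) ^ (-p) = ((1 + t) ^ p)⁻¹ := Real.rpow_neg h1t.le _
    have h2p : (0:ℝ) < (1 + t) ^ p := Real.rpow_pos_of_pos h1t _
    have hinv : (2:ℝ) ^ p * (1 + t) ^ (-p) ≥ 1 := by
      rw [hip, ge_iff_le, le_mul_inv_iff₀ h2p, one_mul]
      exact hpow
    have hfin : b ^ p / p ≤ 2 ^ p * (b ^ p / p + Real.Gamma p) * (1 + t) ^ (-p) := by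
      have hnn : (0:ℝ) ≤ b ^ p / p := by positivity
      nlinarith [Real.rpow_pos_of_pos h1t (-p), Real.rpow_pos_of_pos (show (0:ℝ)<2 by norm_num) p]
    linarith
  · -- large t : substitute s = t*u
    have ht0 : (0:ℝ) < t := by linarith
    have key : (∫ u in (0:ℝ)..b, Real.exp (-(u * t)) * u ^ (p - 1))
        = t ^ (-(p-1)) * (t⁻¹ * ∫ s in (0:ℝ)..(t*b), Real.exp (-s) * s ^ (p - 1)) := by
      have hs := intervalIntegral.integral_comp_mul_left
        (a := (0:ℝ)) (b := b) (fun s => Real.exp (-s) * s ^ (p - 1)) ht0.ne'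
      rw [mul_zero] at hs
      have hcongr : (∫ u in (0:ℝ)..b, Real.exp (-(t*u)) * (t*u) ^ (p - 1))
          = ∫ u in (0:ℝ)..b, t ^ (p-1) * (Real.exp (-(u * t)) * u ^ (p - 1)) := by
        apply intervalIntegral.integral_congr
        intro u hu
        rw [Set.uIcc_of_le hb.le] at hu
        simp only [Real.mul_rpow ht0.le hu.1]
        ring_nf
      rw [hcongr, intervalIntegral.integral_const_mul, smul_eq_mul] at hs
      have htp : (0:ℝ) < t ^ (p-1) := Real.rpow_pos_of_pos ht0 _
      have : (∫ u in (0:ℝ)..b, Real.exp (-(u * t)) * u ^ (p - 1))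
          = (t ^ (p-1))⁻¹ * (t⁻¹ * ∫ s in (0:ℝ)..(t*b), Real.exp (-s) * s ^ (p - 1)) := by
        rw [← hs, ← mul_assoc, inv_mul_cancel₀ htp.ne', one_mul]
      rw [this, ← Real.rpow_neg ht0.le]
    have hsub : (∫ s in (0:ℝ)..(t*b), Real.exp (-s) * s ^ (p - 1)) ≤ Real.Gamma p := by
      rw [Real.Gamma_eq_integral hp]
      rw [intervalIntegral.integral_of_le (by positivity)]
      apply setIntegral_mono_set (Real.GammaIntegral_convergent hp)
      · filter_upwards [ae_restrict_mem measurableSet_Ioi] with x hx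
        exact mul_nonneg (Real.exp_pos _).le (Real.rpow_nonneg (le_of_lt hx) _)
      · exact HasSubset.Subset.eventuallyLE Ioc_subset_Ioi_self
    have hGnn : 0 ≤ ∫ s in (0:ℝ)..(t*b), Real.exp (-s) * s ^ (p - 1) := by
      apply intervalIntegral.integral_nonneg (by positivity)
      intro u hu
      exact mul_nonneg (Real.exp_pos _).le (Real.rpow_nonneg hu.1 _)
    rw [key]
    have htpinv : (0:ℝ) < t ^ (-(p-1)) := Real.rpow_pos_of_pos ht0 _
    have step : t ^ (-(p-1)) * (t⁻¹ * ∫ s in (0:ℝ)..(t*b), Real.exp (-s) * s ^ (p - 1))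
        ≤ t ^ (-(p-1)) * (t⁻¹ * Real.Gamma p) := by
      apply mul_le_mul_of_nonneg_left _ htpinv.le
      apply mul_le_mul_of_nonneg_left hsub (by positivity)
    refine le_trans step ?_
    -- now : t^{-(p-1)} * t⁻¹ * Γ p  ≤ 2^p (b^p/p + Γ p) (1+t)^{-p}
    have hpow : (1 + t) ^ p ≤ 2 ^ p * (t ^ (p-1) * t) := by
      have h2t : (1 + t) ≤ 2 * t := by linarith
      have : (1 + t) ^ p ≤ (2*t) ^ p := Real.rpow_le_rpow h1t.le h2t hp.le
      rw [Real.mul_rpow (by norm_num) ht0.le] at this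
      have htt : t ^ p = t ^ (p-1) * t := by
        have h4 := Real.rpow_add ht0 (p-1) 1
        rw [Real.rpow_one] at h4
        rw [← h4]
        norm_num
      rw [htt] at this
      linarith
    have h2p : (0:ℝ) < (1 + t) ^ p := Real.rpow_pos_of_pos h1t _
    have htp1 : (0:ℝ) < t ^ (p-1) := Real.rpow_pos_of_pos ht0 _
    have e1 : t ^ (-(p-1)) * (t⁻¹ * Real.Gamma p) = Real.Gamma p / (t ^ (p-1) * t) := by
      rw [Real.rpow_neg ht0.le, div_eq_mul_inv, mul_inv]
      ring
    rw [e1, Real.rpow_neg h1t.le, ← div_eq_mul_inv,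
      div_le_div_iff₀ (by positivity) h2p]
    have hposA : (0:ℝ) < 2 ^ p := Real.rpow_pos_of_pos (by norm_num) p
    have hBpos : (0:ℝ) < t ^ (p-1) * t := mul_pos htp1 ht0
    have hcross : Real.Gamma p * (1 + t) ^ p ≤ Real.Gamma p * (2 ^ p * (t ^ (p-1) * t)) :=
      mul_le_mul_of_nonneg_left hpow hgamma.le
    have hextra : 0 ≤ (b ^ p / p) * (2 ^ p * (t ^ (p-1) * t)) := by positivity
    nlinarith [hcross, hextra]

/-- the generalized kernel -/
noncomputable def Hgen (p q t : ℝ) : ℝ :=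
  ∫ z in (-1:ℝ)..1, Real.exp (z * t) * (1 - z) ^ (p - 1) * (1 + z) ^ q

lemma Hgen_upper (p q : ℝ) (hp : 0 < p) (hq : -1 < q) :
    ∃ c : ℝ, 0 < c ∧ ∀ t : ℝ, 0 ≤ t →
      Hgen p q t ≤ c * (Real.exp t * (1 + t) ^ (-p)) := by
  obtain ⟨cJ, hcJ, hJ⟩ := Jbound p 1 hp one_pos
  obtain ⟨M, hM, hMb⟩ := expDom p hp.le
  set Mp : ℝ := max 1 (2 ^ (p - 1)) with hMp
  set Mq : ℝ := max 1 (2 ^ q) with hMq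
  have hMppos : (0:ℝ) < Mp := lt_of_lt_of_le one_pos (le_max_left _ _)
  have hMqpos : (0:ℝ) < Mq := lt_of_lt_of_le one_pos (le_max_left _ _)
  have hq1 : (0:ℝ) < q + 1 := by linarith
  refine ⟨Mp / (q + 1) * M + Mq * cJ,
    add_pos (mul_pos (div_pos hMppos hq1) hM) (mul_pos hMqpos hcJ), fun t ht => ?_⟩
  have h1t : (0:ℝ) < 1 + t := by linarith
  have hIab : Hgen p q t = (∫ z in (-1:ℝ)..0, Real.exp (z * t) * (1 - z) ^ (p-1) * (1 + z) ^ q)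
      + ∫ z in (0:ℝ)..1, Real.exp (z * t) * (1 - z) ^ (p-1) * (1 + z) ^ q := by
    rw [Hgen, ← intervalIntegral.integral_add_adjacent_intervals
      ((masterInt (p-1) q t (by linarith) hq).mono_set ?_)
      ((masterInt (p-1) q t (by linarith) hq).mono_set ?_)]
    · rw [Set.uIcc_of_le (by norm_num : (-1:ℝ) ≤ 0), Set.uIcc_of_le (by norm_num : (-1:ℝ) ≤ 1)]
      exact Set.Icc_subset_Icc le_rfl (by norm_num)
    · rw [Set.uIcc_of_le (by norm_num : (0:ℝ) ≤ 1), Set.uIcc_of_le (by norm_num : (-1:ℝ) ≤ 1)]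
      exact Set.Icc_subset_Icc (by norm_num) le_rfl
  -- piece on [-1,0]
  have hpiece1 : (∫ z in (-1:ℝ)..0, Real.exp (z * t) * (1 - z) ^ (p-1) * (1 + z) ^ q)
      ≤ Mp / (q+1) := by
    have hmono : (∫ z in (-1:ℝ)..0, Real.exp (z * t) * (1 - z) ^ (p-1) * (1 + z) ^ q)
        ≤ ∫ z in (-1:ℝ)..0, Mp * (1 + z) ^ q := by
      apply intervalIntegral.integral_mono_on (by norm_num)
        ((masterInt (p-1) q t (by linarith) hq).mono_set ?_)
        (IntervalIntegrable.const_mul ?_ Mp)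
      · intro z hz
        obtain ⟨hz1, hz2⟩ := hz
        have h2z : (0:ℝ) ≤ 1 + z := by linarith
        have hez : Real.exp (z * t) ≤ 1 := by
          rw [Real.exp_le_one_iff]
          exact mul_nonpos_of_nonpos_of_nonneg hz2 ht
        have hbz : (1:ℝ) ≤ 1 - z := by linarith
        have hbz2 : (1:ℝ) - z ≤ 2 := by linarith
        have hple : (1 - z) ^ (p-1) ≤ Mp := by
          rcases le_total 0 (p-1) with hp0 | hp0
          · exact le_trans (Real.rpow_le_rpow (by linarith) hbz2 hp0) (le_max_right _ _)
          · exact le_trans (Real.rpow_le_one_of_one_le_of_nonpos hbz hp0) (le_max_left _ _)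
        have h0 : (0:ℝ) ≤ (1 - z) ^ (p-1) := Real.rpow_nonneg (by linarith) _
        have h0q : (0:ℝ) ≤ (1 + z) ^ q := Real.rpow_nonneg h2z _
        have : Real.exp (z * t) * (1 - z) ^ (p-1) ≤ Mp := by
          nlinarith [Real.exp_pos (z * t)]
        nlinarith
      · rw [Set.uIcc_of_le (by norm_num : (-1:ℝ) ≤ 0), Set.uIcc_of_le (by norm_num : (-1:ℝ) ≤ 1)]
        exact Set.Icc_subset_Icc le_rfl (by norm_num)
      · -- integrability of (1+z)^q on [-1,0]
        have := (intervalIntegrable_rpow' hq (a := 0) (b := 2)).comp_add_left 1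
        norm_num at this
        exact this.mono_set (by
          rw [Set.uIcc_of_le (by norm_num : (-1:ℝ) ≤ 0), Set.uIcc_of_le (by norm_num : (-1:ℝ) ≤ 1)]
          exact Set.Icc_subset_Icc le_rfl (by norm_num))
    have hval : (∫ z in (-1:ℝ)..0, Mp * (1 + z) ^ q) = Mp / (q+1) := by
      rw [intervalIntegral.integral_const_mul]
      have hcomp := intervalIntegral.integral_comp_add_left (a := (-1:ℝ)) (b := 0)
        (fun u => u ^ q) 1
      norm_num at hcomp
      rw [hcomp, integral_rpow (Or.inl hq)]
      rw [Real.one_rpow, Real.zero_rpow (by linarith : q + 1 ≠ 0)]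
      field_simp
      norm_num
    linarith [hmono, hval.le, hval.ge]
  -- piece on [0,1]
  have hpiece2 : (∫ z in (0:ℝ)..1, Real.exp (z * t) * (1 - z) ^ (p-1) * (1 + z) ^ q)
      ≤ Mq * Real.exp t * (cJ * (1 + t) ^ (-p)) := by
    have hmono : (∫ z in (0:ℝ)..1, Real.exp (z * t) * (1 - z) ^ (p-1) * (1 + z) ^ q)
        ≤ ∫ z in (0:ℝ)..1, Mq * Real.exp t * (Real.exp (-((1-z) * t)) * (1 - z) ^ (p-1)) := by
      apply intervalIntegral.integral_mono_on (by norm_num)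
        ((masterInt (p-1) q t (by linarith) hq).mono_set ?_)
        (IntervalIntegrable.const_mul ?_ _)
      · intro z hz
        obtain ⟨hz1, hz2⟩ := hz
        have h1z : (0:ℝ) ≤ 1 - z := by linarith
        have hbz : (1:ℝ) ≤ 1 + z := by linarith
        have hbz2 : (1:ℝ) + z ≤ 2 := by linarith
        have hqle : (1 + z) ^ q ≤ Mq := by
          rcases le_total 0 q with hq0 | hq0
          · exact le_trans (Real.rpow_le_rpow (by linarith) hbz2 hq0) (le_max_right _ _)
          · exact le_trans (Real.rpow_le_one_of_one_le_of_nonpos hbz hq0) (le_max_left _ _)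
        have hexp : Real.exp (z * t) = Real.exp t * Real.exp (-((1-z) * t)) := by
          rw [← Real.exp_add]; ring_nf
        have h0 : (0:ℝ) ≤ (1 - z) ^ (p-1) := Real.rpow_nonneg h1z _
        have h0e : (0:ℝ) < Real.exp (-((1-z)*t)) := Real.exp_pos _
        have h0t : (0:ℝ) < Real.exp t := Real.exp_pos _
        rw [hexp]
        have base : Real.exp t * Real.exp (-((1-z)*t)) * (1 - z) ^ (p-1) * (1 + z) ^ q
            ≤ Real.exp t * Real.exp (-((1-z)*t)) * (1 - z) ^ (p-1) * Mq := by
          apply mul_le_mul_of_nonneg_left hqle (by positivity)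
        calc Real.exp t * Real.exp (-((1-z)*t)) * (1 - z) ^ (p-1) * (1 + z) ^ q
            ≤ Real.exp t * Real.exp (-((1-z)*t)) * (1 - z) ^ (p-1) * Mq := base
        _ = Mq * Real.exp t * (Real.exp (-((1-z) * t)) * (1 - z) ^ (p-1)) := by ring
      · rw [Set.uIcc_of_le (by norm_num : (0:ℝ) ≤ 1), Set.uIcc_of_le (by norm_num : (-1:ℝ) ≤ 1)]
        exact Set.Icc_subset_Icc (by norm_num) le_rfl
      · -- integrability of exp(-((1-z)t)) (1-z)^{p-1} on [0,1]
        have := (Jintble p t 1 hp ht zero_le_one).comp_sub_left 1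
        norm_num at this
        exact this.symm
    have hval : (∫ z in (0:ℝ)..1, Mq * Real.exp t * (Real.exp (-((1-z) * t)) * (1 - z) ^ (p-1)))
        = Mq * Real.exp t * ∫ u in (0:ℝ)..1, Real.exp (-(u * t)) * u ^ (p-1) := by
      rw [intervalIntegral.integral_const_mul]
      congr 1
      have hcomp := intervalIntegral.integral_comp_sub_left (a := (0:ℝ)) (b := 1)
        (fun u => Real.exp (-(u * t)) * u ^ (p-1)) 1
      norm_num at hcomp
      rw [← hcomp]
    rw [hval] at hmono
    have := hJ t ht
    calc (∫ z in (0:ℝ)..1, Real.exp (z * t) * (1 - z) ^ (p-1) * (1 + z) ^ q)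
        ≤ Mq * Real.exp t * ∫ u in (0:ℝ)..1, Real.exp (-(u * t)) * u ^ (p-1) := hmono
    _ ≤ Mq * Real.exp t * (cJ * (1 + t) ^ (-p)) := by
        apply mul_le_mul_of_nonneg_left this (by positivity)
  -- combine
  have hone : Mp / (q+1) ≤ Mp / (q+1) * M * (Real.exp t * (1 + t) ^ (-p)) := by
    have hMt := hMb t ht
    have hpinv : (1 + t) ^ (-p) = ((1 + t) ^ p)⁻¹ := Real.rpow_neg h1t.le _
    have hppos : (0:ℝ) < (1 + t) ^ p := Real.rpow_pos_of_pos h1t _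
    have key : 1 ≤ M * (Real.exp t * (1 + t) ^ (-p)) := by
      rw [hpinv, ← mul_assoc, le_mul_inv_iff₀ hppos, one_mul]
      linarith
    have hnn : (0:ℝ) ≤ Mp / (q+1) := (div_pos hMppos hq1).le
    nlinarith
  rw [hIab]
  calc (∫ z in (-1:ℝ)..0, Real.exp (z * t) * (1 - z) ^ (p-1) * (1 + z) ^ q)
      + (∫ z in (0:ℝ)..1, Real.exp (z * t) * (1 - z) ^ (p-1) * (1 + z) ^ q)
      ≤ Mp / (q+1) * M * (Real.exp t * (1 + t) ^ (-p))
        + Mq * Real.exp t * (cJ * (1 + t) ^ (-p)) := by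
        have := le_trans hpiece1 hone
        linarith
  _ = (Mp / (q+1) * M + Mq * cJ) * (Real.exp t * (1 + t) ^ (-p)) := by ring

lemma Hgen_lower (p q : ℝ) (hp : 0 < p) (hq : -1 < q) :
    ∃ c : ℝ, 0 < c ∧ ∀ t : ℝ, 0 ≤ t →
      c * (Real.exp t * (1 + t) ^ (-p)) ≤ Hgen p q t := by
  set mq : ℝ := min 1 (2 ^ q) with hmq
  have hmqpos : (0:ℝ) < mq := lt_min one_pos (Real.rpow_pos_of_pos (by norm_num) q)
  refine ⟨Real.exp (-1) * mq / p, by positivity, fun t ht => ?_⟩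
  have h1t : (0:ℝ) < 1 + t := by linarith
  set δ : ℝ := (1 + t)⁻¹ with hδ
  have hδpos : 0 < δ := inv_pos.2 h1t
  have hδ1 : δ ≤ 1 := by
    rw [hδ]
    rw [inv_le_one_iff₀]
    right; linarith
  have hsplit : Hgen p q t =
      (∫ z in (-1:ℝ)..(1-δ), Real.exp (z * t) * (1 - z) ^ (p-1) * (1 + z) ^ q)
      + ∫ z in (1-δ:ℝ)..1, Real.exp (z * t) * (1 - z) ^ (p-1) * (1 + z) ^ q := by
    rw [Hgen, ← intervalIntegral.integral_add_adjacent_intervals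
      ((masterInt (p-1) q t (by linarith) hq).mono_set ?_)
      ((masterInt (p-1) q t (by linarith) hq).mono_set ?_)]
    · rw [Set.uIcc_of_le (by linarith : (-1:ℝ) ≤ 1 - δ),
        Set.uIcc_of_le (by norm_num : (-1:ℝ) ≤ 1)]
      exact Set.Icc_subset_Icc le_rfl (by linarith)
    · rw [Set.uIcc_of_le (by linarith : (1:ℝ) - δ ≤ 1),
        Set.uIcc_of_le (by norm_num : (-1:ℝ) ≤ 1)]
      exact Set.Icc_subset_Icc (by linarith) le_rfl
  have hfirst : 0 ≤ ∫ z in (-1:ℝ)..(1-δ), Real.exp (z * t) * (1 - z) ^ (p-1) * (1 + z) ^ q := by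
    apply intervalIntegral.integral_nonneg (by linarith)
    intro z hz
    have h1z : (0:ℝ) ≤ 1 - z := by have := hz.2; linarith
    have h2z : (0:ℝ) ≤ 1 + z := by have := hz.1; linarith
    exact mul_nonneg (mul_nonneg (Real.exp_pos _).le (Real.rpow_nonneg h1z _))
      (Real.rpow_nonneg h2z _)
  have hsecond : Real.exp (-1) * mq * Real.exp t * (δ ^ p / p)
      ≤ ∫ z in (1-δ:ℝ)..1, Real.exp (z * t) * (1 - z) ^ (p-1) * (1 + z) ^ q := by
    have hmono : (∫ z in (1-δ:ℝ)..1, (Real.exp t * Real.exp (-1) * mq) * (1 - z) ^ (p-1))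
        ≤ ∫ z in (1-δ:ℝ)..1, Real.exp (z * t) * (1 - z) ^ (p-1) * (1 + z) ^ q := by
      apply intervalIntegral.integral_mono_on (by linarith)
        (IntervalIntegrable.const_mul ?_ _)
        ((masterInt (p-1) q t (by linarith) hq).mono_set ?_)
      · intro z hz
        obtain ⟨hz1, hz2⟩ := hz
        have h1z : (0:ℝ) ≤ 1 - z := by linarith
        have h2zb : (1:ℝ) ≤ 1 + z := by
          have : (1:ℝ) - δ ≥ 0 := by linarith
          linarith
        have h2z2 : (1:ℝ) + z ≤ 2 := by linarith
        have hql : mq ≤ (1 + z) ^ q := by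
          rcases le_total 0 q with hq0 | hq0
          · exact le_trans (min_le_left _ _) (Real.one_le_rpow h2zb hq0)
          · exact le_trans (min_le_right _ _) (Real.rpow_le_rpow_of_nonpos (by linarith) h2z2 hq0)
        have hel : Real.exp t * Real.exp (-1) ≤ Real.exp (z * t) := by
          rw [← Real.exp_add, Real.exp_le_exp]
          have hzt : (1 - δ) * t ≤ z * t := mul_le_mul_of_nonneg_right hz1 ht
          have hδt : δ * t ≤ 1 := by
            rw [hδ]
            rw [inv_mul_le_iff₀ h1t]
            linarith
          nlinarith
        have h0 : (0:ℝ) ≤ (1 - z) ^ (p-1) := Real.rpow_nonneg h1z _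
        have step : (Real.exp t * Real.exp (-1) * mq) * (1 - z) ^ (p-1)
            ≤ (Real.exp (z * t) * mq) * (1 - z) ^ (p-1) := by
          apply mul_le_mul_of_nonneg_right _ h0
          exact mul_le_mul_of_nonneg_right hel hmqpos.le
        refine le_trans step ?_
        have step2 : Real.exp (z * t) * mq * (1 - z) ^ (p-1)
            = Real.exp (z*t) * (1 - z) ^ (p-1) * mq := by ring
        rw [step2]
        have := mul_le_mul_of_nonneg_left hql
          (mul_nonneg (Real.exp_pos (z*t)).le h0)
        linarith [this]
      · have hbase := (intervalIntegrable_rpow' (show (-1:ℝ) < p - 1 by linarith)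
          (a := 0) (b := 2)).comp_sub_left 1
        norm_num at hbase
        refine hbase.symm.mono_set ?_
        rw [Set.uIcc_of_le (by linarith : (1:ℝ) - δ ≤ 1),
          Set.uIcc_of_le (by norm_num : (-1:ℝ) ≤ 1)]
        exact Set.Icc_subset_Icc (by linarith) le_rfl
      · rw [Set.uIcc_of_le (by linarith : (1:ℝ) - δ ≤ 1),
          Set.uIcc_of_le (by norm_num : (-1:ℝ) ≤ 1)]
        exact Set.Icc_subset_Icc (by linarith) le_rfl
    have hval : (∫ z in (1-δ:ℝ)..1, (Real.exp t * Real.exp (-1) * mq) * (1 - z) ^ (p-1))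
        = (Real.exp t * Real.exp (-1) * mq) * (δ ^ p / p) := by
      rw [intervalIntegral.integral_const_mul]
      congr 1
      have hcomp := intervalIntegral.integral_comp_sub_left (a := (1-δ:ℝ)) (b := 1)
        (fun u => u ^ (p-1)) 1
      norm_num at hcomp
      rw [hcomp, integral_rpow (Or.inl (by linarith : (-1:ℝ) < p - 1))]
      rw [Real.zero_rpow (by linarith : p - 1 + 1 ≠ 0)]
      norm_num
    calc Real.exp (-1) * mq * Real.exp t * (δ ^ p / p)
        = (Real.exp t * Real.exp (-1) * mq) * (δ ^ p / p) := by ring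
    _ = ∫ z in (1-δ:ℝ)..1, (Real.exp t * Real.exp (-1) * mq) * (1 - z) ^ (p-1) := hval.symm
    _ ≤ _ := hmono
  have hδp : δ ^ p = (1 + t) ^ (-p) := by
    rw [hδ, Real.inv_rpow h1t.le, ← Real.rpow_neg h1t.le]
  rw [hsplit]
  have harr : Real.exp (-1) * mq / p * (Real.exp t * (1 + t) ^ (-p))
      = Real.exp (-1) * mq * Real.exp t * ((1 + t) ^ (-p) / p) := by ring
  rw [harr, ← hδp]
  linarith

lemma Hgen_nonneg (p q t : ℝ) : 0 ≤ Hgen p q t := by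
  apply intervalIntegral.integral_nonneg (by norm_num)
  intro z hz
  exact mul_nonneg (mul_nonneg (Real.exp_pos _).le
    (Real.rpow_nonneg (by linarith [hz.2]) _)) (Real.rpow_nonneg (by linarith [hz.1]) _)

lemma Hgen_meas (p q : ℝ) : Measurable (Hgen p q) := by
  have heq : ∀ t, Hgen p q t
      = ∫ z in Set.Ioc (-1:ℝ) 1, Real.exp (z * t) * (1 - z) ^ (p - 1) * (1 + z) ^ q :=
    fun t => intervalIntegral.integral_of_le (by norm_num)
  rw [show Hgen p q = fun t => ∫ z in Set.Ioc (-1:ℝ) 1,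
    Real.exp (z * t) * (1 - z) ^ (p - 1) * (1 + z) ^ q from funext heq]
  have hm : StronglyMeasurable fun w : ℝ × ℝ =>
      Real.exp (w.2 * w.1) * (1 - w.2) ^ (p - 1) * (1 + w.2) ^ q := by
    apply Measurable.stronglyMeasurable
    exact (((measurable_snd.mul measurable_fst).exp).mul
      ((measRpowConst (p-1)).comp (measurable_const.sub measurable_snd))).mul
      ((measRpowConst q).comp (measurable_const.add measurable_snd))
  exact (MeasureTheory.StronglyMeasurable.integral_prod_right'
    (ν := volume.restrict (Set.Ioc (-1:ℝ) 1)) hm).measurable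

lemma Erk1_eq_s16 (k x v : ℝ) :
    Erk1 k x v = (Real.Gamma (k + 1/2) / (Real.sqrt Real.pi * Real.Gamma k))
      * Hgen k k (x * v) := by
  rw [Erk1, Hgen]
  congr 1
  apply intervalIntegral.integral_congr
  intro z _
  simp only [mul_assoc]

lemma Hgen_negArg (k t : ℝ) : Hgen k k (-t) = Hgen (k+1) (k-1) t := by
  rw [Hgen, Hgen]
  have hcomp := intervalIntegral.integral_comp_neg (a := (-1:ℝ)) (b := 1)
    (fun z => Real.exp (z * t) * (1 - z) ^ (k + 1 - 1) * (1 + z) ^ (k - 1))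
  norm_num at hcomp
  rw [show k + 1 - 1 = k from by ring, ← hcomp]
  apply intervalIntegral.integral_congr
  intro z _
  simp only [show z * -t = -(z*t) from by ring, show (1:ℝ) + -z = 1 - z from by ring]
  ring

/-- generic two-sided comparison of interval integrals from a pointwise comparison -/
lemma comp_integral {a b c : ℝ} (hab : a ≤ b) (hc : 0 < c) {f g : ℝ → ℝ}
    (hfm : AEStronglyMeasurable f (volume.restrict (Set.Ioc a b)))
    (hgm : AEStronglyMeasurable g (volume.restrict (Set.Ioc a b)))
    (hg0 : ∀ x ∈ Set.Icc a b, 0 ≤ g x)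
    (h1 : ∀ x ∈ Set.Icc a b, c⁻¹ * g x ≤ f x)
    (h2 : ∀ x ∈ Set.Icc a b, f x ≤ c * g x) :
    c⁻¹ * (∫ x in a..b, g x) ≤ (∫ x in a..b, f x) ∧
      (∫ x in a..b, f x) ≤ c * ∫ x in a..b, g x := by
  by_cases hg : IntervalIntegrable g volume a b
  · have hf : IntervalIntegrable f volume a b := by
      rw [intervalIntegrable_iff_integrableOn_Ioc_of_le hab] at hg ⊢
      refine Integrable.mono' (hg.const_mul c) hfm ?_
      filter_upwards [ae_restrict_mem measurableSet_Ioc] with x hx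
      have hx' : x ∈ Set.Icc a b := Set.Ioc_subset_Icc_self hx
      rw [Real.norm_eq_abs, abs_of_nonneg ?_]
      · exact h2 x hx'
      · have := h1 x hx'
        have := hg0 x hx'
        nlinarith [inv_pos.2 hc]
    constructor
    · have := intervalIntegral.integral_mono_on hab (hg.const_mul c⁻¹) hf h1
      rwa [intervalIntegral.integral_const_mul] at this
    · have := intervalIntegral.integral_mono_on hab hf (hg.const_mul c) h2
      rwa [intervalIntegral.integral_const_mul] at this
  · have hfnot : ¬ IntervalIntegrable f volume a b := by
      intro hf
      apply hg
      rw [intervalIntegrable_iff_integrableOn_Ioc_of_le hab] at hf ⊢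
      refine Integrable.mono' (hf.const_mul c) hgm ?_
      filter_upwards [ae_restrict_mem measurableSet_Ioc] with x hx
      have hx' : x ∈ Set.Icc a b := Set.Ioc_subset_Icc_self hx
      rw [Real.norm_eq_abs, abs_of_nonneg (hg0 x hx')]
      have h1x := h1 x hx'
      calc g x = c * (c⁻¹ * g x) := by
            rw [← mul_assoc, mul_inv_cancel₀ hc.ne', one_mul]
      _ ≤ c * f x := mul_le_mul_of_nonneg_left h1x hc.le
    rw [intervalIntegral.integral_undef hg, intervalIntegral.integral_undef hfnot]
    norm_num

lemma pointwise_comp (k : ℝ) (hk : 0 < k) :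
    ∃ c : ℝ, 0 < c ∧ ∀ l1 l2 l3 x1 x2 x3 n1 n2 : ℝ,
      l2 < l1 → l3 < l2 → x1 ≤ x2 →
      n1 ∈ Set.Icc l2 l1 → n2 ∈ Set.Icc l3 l2 →
      c⁻¹ * ((n1 - n2) * ((l1 - l2) - (x1 - x2) * (l1 - n1) * (l2 - n2))
            / (1 - (x1 - x2) * (n1 - n2)) ^ (k + 1)
          * ((n1 - l3) * (n2 - l3)) * Real.exp ((x2 - x3) * n1 + (x1 - x3) * n2)
          * Wk k l1 l2 l3 n1 n2)
        ≤ (3 * Real.Gamma (3*k) / Real.Gamma k ^ 2) *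
          (((n1 - l2) * (l1 - n2) * Erk1 k ((x1 - x2) / 2) (n1 - n2)
            + (l1 - n1) * (l2 - n2) * Erk1 k (-(x1 - x2) / 2) (n1 - n2))
          * ((n1 - l3) * (n2 - l3)) * Real.exp ((x1 + x2 - 2*x3) * (n1 + n2) / 2)
          * Wk k l1 l2 l3 n1 n2) ∧
      (3 * Real.Gamma (3*k) / Real.Gamma k ^ 2) *
          (((n1 - l2) * (l1 - n2) * Erk1 k ((x1 - x2) / 2) (n1 - n2)
            + (l1 - n1) * (l2 - n2) * Erk1 k (-(x1 - x2) / 2) (n1 - n2))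
          * ((n1 - l3) * (n2 - l3)) * Real.exp ((x1 + x2 - 2*x3) * (n1 + n2) / 2)
          * Wk k l1 l2 l3 n1 n2)
        ≤ c * ((n1 - n2) * ((l1 - l2) - (x1 - x2) * (l1 - n1) * (l2 - n2))
            / (1 - (x1 - x2) * (n1 - n2)) ^ (k + 1)
          * ((n1 - l3) * (n2 - l3)) * Real.exp ((x2 - x3) * n1 + (x1 - x3) * n2)
          * Wk k l1 l2 l3 n1 n2) := by
  obtain ⟨cUP, hcUP, hUP⟩ := Hgen_upper k k hk (by linarith)
  obtain ⟨cLP, hcLP, hLP⟩ := Hgen_lower k k hk (by linarith)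
  obtain ⟨cUN, hcUN, hUN⟩ := Hgen_upper (k+1) (k-1) (by linarith) (by linarith)
  obtain ⟨cLN, hcLN, hLN⟩ := Hgen_lower (k+1) (k-1) (by linarith) (by linarith)
  set κ : ℝ := Real.Gamma (k + 1/2) / (Real.sqrt Real.pi * Real.Gamma k) with hκ
  set K : ℝ := 3 * Real.Gamma (3*k) / Real.Gamma k ^ 2 with hK
  have hκpos : 0 < κ := by
    rw [hκ]
    exact div_pos (Real.Gamma_pos_of_pos (by linarith))
      (mul_pos (Real.sqrt_pos.mpr Real.pi_pos) (Real.Gamma_pos_of_pos hk))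
  have hKpos : 0 < K := by
    rw [hK]
    exact div_pos (mul_pos (by norm_num) (Real.Gamma_pos_of_pos (by linarith)))
      (pow_pos (Real.Gamma_pos_of_pos hk) 2)
  set KA : ℝ := K * κ with hKA
  have hKApos : 0 < KA := mul_pos hKpos hκpos
  set cmin : ℝ := min cLP cLN with hcmin
  have hcminpos : 0 < cmin := lt_min hcLP hcLN
  set CU : ℝ := max cUP cUN * 2 ^ (k+1) with hCU
  have hCUpos : 0 < CU :=
    mul_pos (lt_of_lt_of_le hcUP (le_max_left _ _)) (Real.rpow_pos_of_pos (by norm_num) _)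
  set cLow : ℝ := KA * cmin with hcLow
  have hcLowpos : 0 < cLow := mul_pos hKApos hcminpos
  set cUpp : ℝ := KA * CU with hcUpp
  have hcUpppos : 0 < cUpp := mul_pos hKApos hCUpos
  refine ⟨max cLow⁻¹ cUpp, lt_of_lt_of_le (inv_pos.2 hcLowpos) (le_max_left _ _), ?_⟩
  intro l1 l2 l3 x1 x2 x3 n1 n2 hl12 hl23 hx12 hn1 hn2
  obtain ⟨hn1a, hn1b⟩ := hn1
  obtain ⟨hn2a, hn2b⟩ := hn2
  set c : ℝ := max cLow⁻¹ cUpp with hc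
  have hcpos : 0 < c := lt_of_lt_of_le (inv_pos.2 hcLowpos) (le_max_left _ _)
  have hcinv : c⁻¹ ≤ cLow := by
    rw [hc]
    have : cLow⁻¹ ≤ max cLow⁻¹ cUpp := le_max_left _ _
    calc (max cLow⁻¹ cUpp)⁻¹ ≤ (cLow⁻¹)⁻¹ :=
          inv_anti₀ (inv_pos.2 hcLowpos) this
    _ = cLow := inv_inv cLow
  have hcup : cUpp ≤ c := le_max_right _ _
  -- basic quantities
  set t : ℝ := (x2 - x1)/2 * (n1 - n2) with htdef
  have hv : 0 ≤ n1 - n2 := by linarith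
  have ht : 0 ≤ t := by
    rw [htdef]; apply mul_nonneg (by linarith) hv
  have h1t : (0:ℝ) < 1 + t := by linarith
  have h2t : (0:ℝ) < 1 + 2*t := by linarith
  set A : ℝ := (n1 - l2) * (l1 - n2) with hA
  set B : ℝ := (l1 - n1) * (l2 - n2) with hB
  have hAnn : 0 ≤ A := by rw [hA]; apply mul_nonneg <;> linarith
  have hBnn : 0 ≤ B := by rw [hB]; apply mul_nonneg <;> linarith
  set HP : ℝ := Hgen k k t with hHP
  set HN : ℝ := Hgen (k+1) (k-1) t with hHN
  -- rewriting the Dunkl kernels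
  have hE1 : Erk1 k ((x1 - x2) / 2) (n1 - n2) = κ * HN := by
    rw [Erk1_eq_s16, hHN, ← Hgen_negArg]
    congr 2
    rw [htdef]; ring
  have hE2 : Erk1 k (-(x1 - x2) / 2) (n1 - n2) = κ * HP := by
    rw [Erk1_eq_s16, hHP]
    congr 2
    rw [htdef]; ring
  -- power comparisons
  have sandwich : ∀ r : ℝ, 0 ≤ r → r ≤ k + 1 →
      (1 + 2*t) ^ (-r) ≤ (1 + t) ^ (-r) ∧
        (1 + t) ^ (-r) ≤ 2 ^ (k+1) * (1 + 2*t) ^ (-r) := by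
    intro r hr hrk
    constructor
    · exact Real.rpow_le_rpow_of_nonpos h1t (by linarith) (by linarith)
    · have e1 : (1 + 2*t) ^ r ≤ 2 ^ r * (1 + t) ^ r := by
        rw [← Real.mul_rpow (by norm_num) h1t.le]
        exact Real.rpow_le_rpow h2t.le (by linarith) hr
      have e2 : (2:ℝ) ^ r ≤ 2 ^ (k+1) :=
        Real.rpow_le_rpow_of_exponent_le (by norm_num) hrk
      have hApos : (0:ℝ) < (1 + t) ^ r := Real.rpow_pos_of_pos h1t _
      have hBpos : (0:ℝ) < (1 + 2*t) ^ r := Real.rpow_pos_of_pos h2t _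
      rw [Real.rpow_neg h1t.le, Real.rpow_neg h2t.le, inv_eq_one_div, inv_eq_one_div,
        mul_one_div, div_le_div_iff₀ hApos hBpos, one_mul]
      calc (1 + 2*t) ^ r ≤ 2 ^ r * (1 + t) ^ r := e1
      _ ≤ 2 ^ (k+1) * (1 + t) ^ r := mul_le_mul_of_nonneg_right e2 hApos.le
  obtain ⟨hQP1, hPQ1⟩ := sandwich (k+1) (by linarith) le_rfl
  obtain ⟨hQP0, hPQ0⟩ := sandwich k hk.le (by linarith)
  set Q1 : ℝ := (1 + 2*t) ^ (-(k+1)) with hQ1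
  set Q0 : ℝ := (1 + 2*t) ^ (-k) with hQ0
  have hQ1pos : 0 < Q1 := Real.rpow_pos_of_pos h2t _
  have hQ0pos : 0 < Q0 := Real.rpow_pos_of_pos h2t _
  have hQ01 : Q0 = (1 + 2*t) * Q1 := by
    rw [hQ0, hQ1, show -k = 1 + -(k+1) from by ring, Real.rpow_add h2t, Real.rpow_one]
  -- bounds on HP, HN against Q-powers
  have hHPlow : cmin * (Real.exp t * Q0) ≤ HP := by
    refine le_trans ?_ (hLP t ht)
    apply mul_le_mul (min_le_left _ _)
      (mul_le_mul_of_nonneg_left hQP0 (Real.exp_pos t).le)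
      (by positivity) hcLP.le
  have hHNlow : cmin * (Real.exp t * Q1) ≤ HN := by
    refine le_trans ?_ (hLN t ht)
    apply mul_le_mul (min_le_right _ _)
      (mul_le_mul_of_nonneg_left hQP1 (Real.exp_pos t).le)
      (by positivity) hcLN.le
  have hHPup : HP ≤ CU * (Real.exp t * Q0) := by
    refine le_trans (hUP t ht) ?_
    rw [hCU]
    calc cUP * (Real.exp t * (1+t) ^ (-k))
        ≤ cUP * (Real.exp t * (2 ^ (k+1) * Q0)) := by
          apply mul_le_mul_of_nonneg_left
            (mul_le_mul_of_nonneg_left hPQ0 (Real.exp_pos t).le) hcUP.le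
    _ = cUP * 2 ^ (k+1) * (Real.exp t * Q0) := by ring
    _ ≤ max cUP cUN * 2 ^ (k+1) * (Real.exp t * Q0) := by
        apply mul_le_mul_of_nonneg_right
          (mul_le_mul_of_nonneg_right (le_max_left _ _)
            (Real.rpow_pos_of_pos (by norm_num) _).le)
          (by positivity)
  have hHNup : HN ≤ CU * (Real.exp t * Q1) := by
    refine le_trans (hUN t ht) ?_
    rw [hCU]
    calc cUN * (Real.exp t * (1+t) ^ (-(k+1)))
        ≤ cUN * (Real.exp t * (2 ^ (k+1) * Q1)) := by
          apply mul_le_mul_of_nonneg_left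
            (mul_le_mul_of_nonneg_left hPQ1 (Real.exp_pos t).le) hcUN.le
    _ = cUN * 2 ^ (k+1) * (Real.exp t * Q1) := by ring
    _ ≤ max cUP cUN * 2 ^ (k+1) * (Real.exp t * Q1) := by
        apply mul_le_mul_of_nonneg_right
          (mul_le_mul_of_nonneg_right (le_max_right _ _)
            (Real.rpow_pos_of_pos (by norm_num) _).le)
          (by positivity)
  -- numerator identity
  set num : ℝ := (n1 - n2) * ((l1 - l2) - (x1 - x2) * (l1 - n1) * (l2 - n2)) with hnumdef
  have hnum : num = A + B * (1 + 2*t) := by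
    rw [hnumdef, hA, hB, htdef]; ring
  have hnumnn : 0 ≤ num := by
    rw [hnum]
    have : 0 ≤ B * (1 + 2*t) := mul_nonneg hBnn h2t.le
    linarith
  -- core scalar comparison
  set Tg : ℝ := num * Q1 * Real.exp t with hTg
  have hTgnn : 0 ≤ Tg := by
    rw [hTg]
    exact mul_nonneg (mul_nonneg hnumnn hQ1pos.le) (Real.exp_pos t).le
  set Core : ℝ := KA * (A * HN + B * HP) with hCore
  have hQsum : A * Q1 + B * Q0 = num * Q1 := by
    rw [hQ01, hnum]; ring
  have hlow : cLow * Tg ≤ Core := by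
    have s1 : A * (cmin * (Real.exp t * Q1)) ≤ A * HN :=
      mul_le_mul_of_nonneg_left hHNlow hAnn
    have s2 : B * (cmin * (Real.exp t * Q0)) ≤ B * HP :=
      mul_le_mul_of_nonneg_left hHPlow hBnn
    have s3 : A * (cmin * (Real.exp t * Q1)) + B * (cmin * (Real.exp t * Q0))
        = cmin * Real.exp t * (A * Q1 + B * Q0) := by ring
    rw [hCore, hcLow]
    have s4 : cmin * Real.exp t * (A * Q1 + B * Q0) = cmin * Tg := by
      rw [hQsum, hTg]; ring
    have s5 : cmin * Tg ≤ A * HN + B * HP := by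
      rw [← s4, ← s3]; linarith
    calc KA * cmin * Tg = KA * (cmin * Tg) := by ring
    _ ≤ KA * (A * HN + B * HP) := mul_le_mul_of_nonneg_left s5 hKApos.le
  have hup : Core ≤ cUpp * Tg := by
    have s1 : A * HN ≤ A * (CU * (Real.exp t * Q1)) :=
      mul_le_mul_of_nonneg_left hHNup hAnn
    have s2 : B * HP ≤ B * (CU * (Real.exp t * Q0)) :=
      mul_le_mul_of_nonneg_left hHPup hBnn
    have s3 : A * (CU * (Real.exp t * Q1)) + B * (CU * (Real.exp t * Q0))
        = CU * Real.exp t * (A * Q1 + B * Q0) := by ring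
    have s4 : CU * Real.exp t * (A * Q1 + B * Q0) = CU * Tg := by
      rw [hQsum, hTg]; ring
    have s5 : A * HN + B * HP ≤ CU * Tg := by rw [← s4, ← s3]; linarith
    rw [hCore, hcUpp]
    calc KA * (A * HN + B * HP) ≤ KA * (CU * Tg) :=
        mul_le_mul_of_nonneg_left s5 hKApos.le
    _ = KA * CU * Tg := by ring
  -- identities for the two integrands
  set S : ℝ := (x1 + x2 - 2*x3) * (n1 + n2) / 2 with hS
  set S' : ℝ := (x2 - x3) * n1 + (x1 - x3) * n2 with hS'
  have hSS : Real.exp S' = Real.exp t * Real.exp S := by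
    rw [← Real.exp_add]
    congr 1
    rw [hS', hS, htdef]; ring
  set P : ℝ := Real.exp S * ((n1 - l3) * (n2 - l3) * Wk k l1 l2 l3 n1 n2) with hP
  have hWknn : 0 ≤ Wk k l1 l2 l3 n1 n2 := by
    rw [Wk]
    apply Real.rpow_nonneg
    have h1 : 0 ≤ l1 - n1 := by linarith
    have h2 : 0 ≤ l1 - n2 := by linarith
    have h3 : 0 ≤ n1 - l2 := by linarith
    have h4 : 0 ≤ l2 - n2 := by linarith
    have h5 : 0 ≤ n1 - l3 := by linarith
    have h6 : 0 ≤ n2 - l3 := by linarith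
    exact mul_nonneg (mul_nonneg (mul_nonneg (mul_nonneg (mul_nonneg h1 h2) h3) h4) h5) h6
  have hPnn : 0 ≤ P := by
    rw [hP]
    apply mul_nonneg (Real.exp_pos _).le
    apply mul_nonneg (mul_nonneg (by linarith) (by linarith)) hWknn
  have hD : 1 - (x1 - x2) * (n1 - n2) = 1 + 2*t := by rw [htdef]; ring
  have hgid : num / (1 - (x1 - x2) * (n1 - n2)) ^ (k + 1)
          * ((n1 - l3) * (n2 - l3)) * Real.exp S'
          * Wk k l1 l2 l3 n1 n2 = Tg * P := by
    rw [hD]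
    have hpow : ((1:ℝ) + 2*t) ^ (k+1) = Q1⁻¹ := by
      rw [hQ1, Real.rpow_neg h2t.le, inv_inv]
    rw [hpow, div_inv_eq_mul, hSS, hTg, hP]
    ring
  have hfid : K * ((A * Erk1 k ((x1 - x2) / 2) (n1 - n2)
            + B * Erk1 k (-(x1 - x2) / 2) (n1 - n2))
          * ((n1 - l3) * (n2 - l3)) * Real.exp S
          * Wk k l1 l2 l3 n1 n2) = Core * P := by
    rw [hE1, hE2, hCore, hKA, hP]
    ring
  constructor
  · rw [hgid, hfid]
    calc c⁻¹ * (Tg * P) = (c⁻¹ * Tg) * P := by ring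
    _ ≤ (cLow * Tg) * P := by
        apply mul_le_mul_of_nonneg_right (mul_le_mul_of_nonneg_right hcinv hTgnn) hPnn
    _ ≤ Core * P := mul_le_mul_of_nonneg_right hlow hPnn
  · rw [hgid, hfid]
    calc Core * P ≤ (cUpp * Tg) * P := mul_le_mul_of_nonneg_right hup hPnn
    _ ≤ (c * Tg) * P := by
        apply mul_le_mul_of_nonneg_right (mul_le_mul_of_nonneg_right hcup hTgnn) hPnn
    _ = c * (Tg * P) := by ring

/-- Lemma 5.x: two-sided estimate for `V(λ)^{2k} E_k(X,λ)`. -/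
theorem lemma_alpha_minus (k : ℝ) (hk : 0 < k) :
    ∃ C : ℝ, 0 < C ∧ ∀ l1 l2 l3 x1 x2 x3 : ℝ,
      l1 + l2 + l3 = 0 →
      l2 < l1 →
      l3 < l2 →
      x1 + x2 + x3 = 0 →
      x1 ≤ x2 →
      (C⁻¹ * (∫ n2 in l3..l2, ∫ n1 in l2..l1,
          (n1 - n2) * ((l1 - l2) - (x1 - x2) * (l1 - n1) * (l2 - n2))
            / (1 - (x1 - x2) * (n1 - n2)) ^ (k + 1)
          * ((n1 - l3) * (n2 - l3)) * Real.exp ((x2 - x3) * n1 + (x1 - x3) * n2)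
          * Wk k l1 l2 l3 n1 n2)
        ≤ Vlam l1 l2 l3 ^ (2 * k) * EkA2 k x1 x2 x3 l1 l2 l3 ∧
      Vlam l1 l2 l3 ^ (2 * k) * EkA2 k x1 x2 x3 l1 l2 l3
        ≤ C * (∫ n2 in l3..l2, ∫ n1 in l2..l1,
          (n1 - n2) * ((l1 - l2) - (x1 - x2) * (l1 - n1) * (l2 - n2))
            / (1 - (x1 - x2) * (n1 - n2)) ^ (k + 1)
          * ((n1 - l3) * (n2 - l3)) * Real.exp ((x2 - x3) * n1 + (x1 - x3) * n2)
          * Wk k l1 l2 l3 n1 n2)) := by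
  obtain ⟨c, hcpos, hpc⟩ := pointwise_comp k hk
  refine ⟨c, hcpos, ?_⟩
  intro l1 l2 l3 x1 x2 x3 hlsum hl12 hl23 hxsum hx12
  -- named integrands
  set F : ℝ → ℝ → ℝ := fun n2 n1 =>
      ((n1 - l2) * (l1 - n2) * Erk1 k ((x1 - x2) / 2) (n1 - n2)
        + (l1 - n1) * (l2 - n2) * Erk1 k (-(x1 - x2) / 2) (n1 - n2))
      * ((n1 - l3) * (n2 - l3)) * Real.exp ((x1 + x2 - 2 * x3) * (n1 + n2) / 2)
      * Wk k l1 l2 l3 n1 n2 with hF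
  set G : ℝ → ℝ → ℝ := fun n2 n1 =>
      (n1 - n2) * ((l1 - l2) - (x1 - x2) * (l1 - n1) * (l2 - n2))
        / (1 - (x1 - x2) * (n1 - n2)) ^ (k + 1)
      * ((n1 - l3) * (n2 - l3)) * Real.exp ((x2 - x3) * n1 + (x1 - x3) * n2)
      * Wk k l1 l2 l3 n1 n2 with hG
  set K : ℝ := 3 * Real.Gamma (3 * k) / Real.Gamma k ^ 2 with hKdef
  -- algebra : V^{2k} E = K ∬F
  have hVpos : (0:ℝ) < Vlam l1 l2 l3 ^ (2 * k) := by
    apply Real.rpow_pos_of_pos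
    rw [Vlam]
    have h13 : l3 < l1 := lt_trans hl23 hl12
    apply mul_pos (mul_pos (by linarith) (by linarith)) (by linarith)
  have hGammaSq : (0:ℝ) < Real.Gamma k ^ 2 := pow_pos (Real.Gamma_pos_of_pos hk) 2
  have halg : ∀ I : ℝ, Vlam l1 l2 l3 ^ (2 * k)
      * (3 * Real.Gamma (3 * k) / (Vlam l1 l2 l3 ^ (2 * k) * Real.Gamma k ^ 2) * I)
      = K * I := by
    intro I
    rw [hKdef]
    field_simp
  have hVE : Vlam l1 l2 l3 ^ (2 * k) * EkA2 k x1 x2 x3 l1 l2 l3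
      = K * ∫ n2 in l3..l2, ∫ n1 in l2..l1, F n2 n1 := by
    rw [EkA2]
    exact halg _
  -- joint measurability
  have mWk : Measurable fun w : ℝ × ℝ => Wk k l1 l2 l3 w.2 w.1 := by
    simp only [Wk]
    exact (measRpowConst (k-1)).comp
      ((((((measurable_const.sub measurable_snd).mul
        (measurable_const.sub measurable_fst)).mul
        (measurable_snd.sub measurable_const)).mul
        (measurable_const.sub measurable_fst)).mul
        (measurable_snd.sub measurable_const)).mul
        (measurable_fst.sub measurable_const))
  have mE : ∀ a : ℝ, Measurable fun w : ℝ × ℝ => Erk1 k a (w.2 - w.1) := by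
    intro a
    simp only [Erk1_eq_s16]
    exact ((Hgen_meas k k).comp ((measurable_snd.sub measurable_fst).const_mul a)).const_mul _
  have mF : Measurable fun w : ℝ × ℝ => F w.1 w.2 := by
    rw [hF]
    refine ((Measurable.mul (Measurable.mul ?_ ?_) ?_)).mul mWk
    · exact (((measurable_snd.sub measurable_const).mul
        (measurable_const.sub measurable_fst)).mul (mE _)).add
        (((measurable_const.sub measurable_snd).mul
          (measurable_const.sub measurable_fst)).mul (mE _))
    · exact (measurable_snd.sub measurable_const).mul (measurable_fst.sub measurable_const)
    · exact Real.measurable_exp.comp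
        (((measurable_snd.add measurable_fst).const_mul (x1 + x2 - 2*x3)).div_const 2)
  have mG : Measurable fun w : ℝ × ℝ => G w.1 w.2 := by
    rw [hG]
    refine ((Measurable.mul (Measurable.mul ?_ ?_) ?_)).mul mWk
    · refine Measurable.div ?_ ?_
      · exact (measurable_snd.sub measurable_fst).mul
          (measurable_const.sub (((measurable_const.sub measurable_snd).const_mul
            (x1 - x2)).mul (measurable_const.sub measurable_fst)))
      · exact (measRpowConst (k+1)).comp
          (measurable_const.sub ((measurable_snd.sub measurable_fst).const_mul (x1 - x2)))
    · exact (measurable_snd.sub measurable_const).mul (measurable_fst.sub measurable_const)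
    · exact Real.measurable_exp.comp
        ((measurable_snd.const_mul (x2 - x3)).add (measurable_fst.const_mul (x1 - x3)))
  -- nonnegativity of G
  have hGnn : ∀ n1 n2 : ℝ, n1 ∈ Set.Icc l2 l1 → n2 ∈ Set.Icc l3 l2 → 0 ≤ G n2 n1 := by
    intro n1 n2 hn1 hn2
    obtain ⟨ha1, hb1⟩ := hn1
    obtain ⟨ha2, hb2⟩ := hn2
    rw [hG]
    have hDpos : (0:ℝ) < 1 - (x1 - x2) * (n1 - n2) := by
      have : (x1 - x2) * (n1 - n2) ≤ 0 :=
        mul_nonpos_of_nonpos_of_nonneg (by linarith) (by linarith)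
      linarith
    have hnum : 0 ≤ (n1 - n2) * ((l1 - l2) - (x1 - x2) * (l1 - n1) * (l2 - n2)) := by
      apply mul_nonneg (by linarith)
      have : (x1 - x2) * (l1 - n1) * (l2 - n2) ≤ 0 := by
        apply mul_nonpos_of_nonpos_of_nonneg _ (by linarith)
        apply mul_nonpos_of_nonpos_of_nonneg (by linarith) (by linarith)
      linarith
    have hWknn : 0 ≤ Wk k l1 l2 l3 n1 n2 := by
      rw [Wk]
      apply Real.rpow_nonneg
      have h13 : l3 < l1 := lt_trans hl23 hl12
      exact mul_nonneg (mul_nonneg (mul_nonneg (mul_nonneg (mul_nonneg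
        (by linarith) (by linarith)) (by linarith)) (by linarith)) (by linarith)) (by linarith)
    apply mul_nonneg (mul_nonneg (mul_nonneg ?_ ?_) (Real.exp_pos _).le) hWknn
    · exact div_nonneg hnum (Real.rpow_nonneg (by linarith) _)
    · exact mul_nonneg (by linarith) (by linarith)
  -- inner comparison for each n2
  have hinner : ∀ n2 ∈ Set.Icc l3 l2,
      c⁻¹ * (∫ n1 in l2..l1, G n2 n1) ≤ K * (∫ n1 in l2..l1, F n2 n1) ∧
      K * (∫ n1 in l2..l1, F n2 n1) ≤ c * ∫ n1 in l2..l1, G n2 n1 := by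
    intro n2 hn2
    have h := comp_integral (a := l2) (b := l1) hl12.le hcpos
      (f := fun n1 => K * F n2 n1) (g := fun n1 => G n2 n1)
      (((mF.comp (measurable_const.prodMk measurable_id)).const_mul K).aestronglyMeasurable)
      ((mG.comp (measurable_const.prodMk measurable_id)).aestronglyMeasurable)
      (fun n1 hn1 => hGnn n1 n2 hn1 hn2)
      (fun n1 hn1 => by
        have := (hpc l1 l2 l3 x1 x2 x3 n1 n2 hl12 hl23 hx12 hn1 hn2).1
        rw [hF, hG, hKdef]
        exact this)
      (fun n1 hn1 => by
        have := (hpc l1 l2 l3 x1 x2 x3 n1 n2 hl12 hl23 hx12 hn1 hn2).2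
        rw [hF, hG, hKdef]
        exact this)
    rwa [intervalIntegral.integral_const_mul] at h
  -- outer measurability
  have mFI : Measurable fun n2 => ∫ n1 in l2..l1, F n2 n1 := by
    have heq : (fun n2 => ∫ n1 in l2..l1, F n2 n1)
        = fun n2 => ∫ n1 in Set.Ioc l2 l1, F n2 n1 :=
      funext fun n2 => intervalIntegral.integral_of_le hl12.le
    rw [heq]
    exact (MeasureTheory.StronglyMeasurable.integral_prod_right'
      (ν := volume.restrict (Set.Ioc l2 l1)) mF.stronglyMeasurable).measurable
  have mGI : Measurable fun n2 => ∫ n1 in l2..l1, G n2 n1 := by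
    have heq : (fun n2 => ∫ n1 in l2..l1, G n2 n1)
        = fun n2 => ∫ n1 in Set.Ioc l2 l1, G n2 n1 :=
      funext fun n2 => intervalIntegral.integral_of_le hl12.le
    rw [heq]
    exact (MeasureTheory.StronglyMeasurable.integral_prod_right'
      (ν := volume.restrict (Set.Ioc l2 l1)) mG.stronglyMeasurable).measurable
  -- outer comparison
  have houter := comp_integral (a := l3) (b := l2) hl23.le hcpos
    (f := fun n2 => K * ∫ n1 in l2..l1, F n2 n1)
    (g := fun n2 => ∫ n1 in l2..l1, G n2 n1)
    ((mFI.const_mul K).aestronglyMeasurable)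
    (mGI.aestronglyMeasurable)
    (fun n2 hn2 => intervalIntegral.integral_nonneg hl12.le
      (fun n1 hn1 => hGnn n1 n2 hn1 hn2))
    (fun n2 hn2 => (hinner n2 hn2).1)
    (fun n2 hn2 => (hinner n2 hn2).2)
  rw [intervalIntegral.integral_const_mul] at houter
  rw [hVE]
  exact houter
end
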